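/- arXiv:2106.01470 — 6 statements merged into one kernel-verified Lean document; each statement's English description precedes it below -/
import Mathlib

section
/- For every fixed integer K ≥ 0, one has lim_{n→∞} n^K · ( Z_{3;1}(n)/n! − S_{3;1;K}(n)/n! ) = 0. In other words, Z_{3;1}(n)/n! admits the all-orders asymptotic expansion 1 + ∑_{k=2}^{∞} (1/(n(n−1)⋯(n−k+1))) · ∑_{q ⊢ k, q with no part equal to 1} Sym(q) as n → ∞. -/
open Finset Filter

/-- Symmetry factor of a partition `p` of `n`: `Sym(p) = ∏_{i=1}^n i^(p_i) · (p_i)!`,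
where `p_i` is the number of parts of `p` equal to `i`. -/
def symFactor {n : ℕ} (p : n.Partition) : ℕ :=
  ∏ i ∈ Finset.range (n + 1), i ^ p.parts.count i * (p.parts.count i).factorial

lemma part_le {n : ℕ} (p : n.Partition) {i : ℕ} (hi : i ∈ p.parts) : i ≤ n := by
  rw [← p.parts_sum]
  exact Multiset.single_le_sum (fun x _ => Nat.zero_le x) i hi

lemma symFactor_eq_toFinset {n : ℕ} (p : n.Partition) :
    symFactor p = ∏ i ∈ p.parts.toFinset, i ^ p.parts.count i * (p.parts.count i).factorial := by
  rw [symFactor]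
  refine (Finset.prod_subset ?_ ?_).symm
  · intro x hx
    simp only [Finset.mem_range]
    exact Nat.lt_succ_of_le (part_le p (Multiset.mem_toFinset.mp hx))
  · intro x _ hx
    rw [Multiset.count_eq_zero_of_notMem (fun h => hx (Multiset.mem_toFinset.mpr h))]
    simp


lemma symFactor_le_noOnes {k : ℕ} (q : k.Partition) (hq : 1 ∉ q.parts) :
    symFactor q ≤ 2 ^ k * (k / 2).factorial := by
  classical
  have htwo : ∀ i ∈ q.parts, 2 ≤ i := by
    intro i hi
    rcases Nat.lt_or_ge i 2 with h | h
    · interval_cases i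
      · exact absurd (q.parts_pos hi) (by simp)
      · exact absurd hi hq
    · exact h
  have hsum : ∑ i ∈ q.parts.toFinset, q.parts.count i * i = k := by
    have h := (Finset.sum_multiset_count q.parts).symm
    simpa [smul_eq_mul, q.parts_sum] using h
  have hcard : Multiset.card q.parts ≤ k / 2 := by
    rw [Nat.le_div_iff_mul_le (by norm_num)]
    calc Multiset.card q.parts * 2 = Multiset.card q.parts • 2 := by rw [smul_eq_mul]
      _ ≤ q.parts.sum := Multiset.card_nsmul_le_sum htwo
      _ = k := q.parts_sum
  rw [symFactor_eq_toFinset, Finset.prod_mul_distrib]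
  have h1 : ∏ i ∈ q.parts.toFinset, i ^ q.parts.count i ≤ 2 ^ k := by
    calc ∏ i ∈ q.parts.toFinset, i ^ q.parts.count i
        ≤ ∏ i ∈ q.parts.toFinset, (2 ^ (i - 1)) ^ q.parts.count i := by
          apply Finset.prod_le_prod (fun _ _ => Nat.zero_le _)
          intro i hi
          apply Nat.pow_le_pow_left
          have h2 := htwo i (Multiset.mem_toFinset.mp hi)
          have h3 : i - 1 < 2 ^ (i - 1) := Nat.lt_two_pow_self
          omega
      _ = 2 ^ ∑ i ∈ q.parts.toFinset, (i - 1) * q.parts.count i := by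
          rw [← Finset.prod_pow_eq_pow_sum]
          exact Finset.prod_congr rfl fun i _ => (pow_mul 2 (i-1) _).symm
      _ ≤ 2 ^ k := by
          apply Nat.pow_le_pow_right (by norm_num)
          calc ∑ i ∈ q.parts.toFinset, (i - 1) * q.parts.count i
              ≤ ∑ i ∈ q.parts.toFinset, q.parts.count i * i := Finset.sum_le_sum fun i _ => by
                rw [mul_comm (q.parts.count i) i]; exact Nat.mul_le_mul_right _ (Nat.sub_le _ _)
            _ = k := hsum
  have h2 : ∏ i ∈ q.parts.toFinset, (q.parts.count i).factorial ≤ (k / 2).factorial := by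
    calc ∏ i ∈ q.parts.toFinset, (q.parts.count i).factorial
        ≤ (∑ i ∈ q.parts.toFinset, q.parts.count i).factorial :=
          Nat.le_of_dvd (Nat.factorial_pos _) (Nat.prod_factorial_dvd_factorial_sum _ _)
      _ = (Multiset.card q.parts).factorial := by rw [Multiset.toFinset_sum_count_eq]
      _ ≤ (k / 2).factorial := Nat.factorial_le hcard
  exact Nat.mul_le_mul h1 h2

/-- `∑_{q ⊢ k, q with no part equal to 1} Sym(q)`. -/
def symSumNoOnes (k : ℕ) : ℕ :=
  ∑ q ∈ Finset.univ.filter (fun q : Nat.Partition k => 1 ∉ q.parts), symFactor q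

lemma card_partition_le (k : ℕ) : Fintype.card (Nat.Partition k) ≤ 2 ^ k := by
  classical
  have h : Function.Injective (fun p : Nat.Partition k =>
      (⟨p.parts.sort (· ≤ ·), fun {i} hi => p.parts_pos (by
          rwa [Multiset.mem_sort] at hi),
        by rw [← Multiset.sum_coe, Multiset.sort_eq]; exact p.parts_sum⟩ : Composition k)) := by
    intro p₁ p₂ h
    have h2 : (p₁.parts.sort (· ≤ ·) : Multiset ℕ) = (p₂.parts.sort (· ≤ ·) : Multiset ℕ) := by
      exact congrArg _ (congrArg Composition.blocks h)
    rwa [Multiset.sort_eq, Multiset.sort_eq, ← Nat.Partition.ext_iff] at h2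
  calc Fintype.card (Nat.Partition k) ≤ Fintype.card (Composition k) :=
        Fintype.card_le_of_injective _ h
    _ = 2 ^ (k - 1) := composition_card k
    _ ≤ 2 ^ k := Nat.pow_le_pow_right (by norm_num) (Nat.sub_le _ _)

lemma symSumNoOnes_le (k : ℕ) : symSumNoOnes k ≤ 4 ^ k * (k / 2).factorial := by
  classical
  calc symSumNoOnes k
      ≤ ∑ _q ∈ Finset.univ.filter (fun q : Nat.Partition k => 1 ∉ q.parts),
          2 ^ k * (k / 2).factorial := by
        apply Finset.sum_le_sum
        intro q hq
        exact symFactor_le_noOnes q (Finset.mem_filter.mp hq).2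
    _ = (Finset.univ.filter (fun q : Nat.Partition k => 1 ∉ q.parts)).card *
          (2 ^ k * (k / 2).factorial) := by rw [Finset.sum_const, smul_eq_mul]
    _ ≤ 2 ^ k * (2 ^ k * (k / 2).factorial) := by
        apply Nat.mul_le_mul_right
        calc (Finset.univ.filter (fun q : Nat.Partition k => 1 ∉ q.parts)).card
            ≤ Finset.univ.card := Finset.card_filter_le _ _
          _ = Fintype.card (Nat.Partition k) := rfl
          _ ≤ 2 ^ k := card_partition_le k
    _ = 4 ^ k * (k / 2).factorial := by rw [← mul_assoc, ← pow_add, ← two_mul, pow_mul]; norm_num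

/-- `Z_{3;1}(n)`: the sum of `Sym(p)` over partitions `p` of `n` having at least one
part equal to 1. -/
def Z31 (n : ℕ) : ℕ :=
  ∑ p ∈ Finset.univ.filter (fun p : Nat.Partition n => 1 ∈ p.parts), symFactor p

/-- `S_{3;1;K}(n) = ∑_{k=0}^{K} (n−k)! · ∑_{q ⊢ k, no part 1} Sym(q)`. -/
def S31 (K n : ℕ) : ℕ :=
  ∑ k ∈ Finset.range (K + 1), (n - k).factorial * symSumNoOnes k

lemma symFactor_add_ones {k n m : ℕ} (q : k.Partition) (hq : 1 ∉ q.parts)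
    (p : n.Partition) (hp : p.parts = q.parts + Multiset.replicate m 1) :
    symFactor p = m.factorial * symFactor q := by
  classical
  have hcount : ∀ i, i ≠ 1 → p.parts.count i = q.parts.count i := by
    intro i hi
    rw [hp, Multiset.count_add, Multiset.count_replicate, if_neg (Ne.symm hi), add_zero]
  have hcount1 : p.parts.count 1 = m := by
    rw [hp, Multiset.count_add, Multiset.count_replicate, if_pos rfl,
      Multiset.count_eq_zero_of_notMem hq, zero_add]
  rcases Nat.eq_zero_or_pos m with hm | hm
  · subst hm
    simp only [Nat.factorial_zero, one_mul]
    rw [symFactor_eq_toFinset, symFactor_eq_toFinset]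
    have : p.parts = q.parts := by rw [hp, Multiset.replicate_zero, add_zero]
    rw [this]
  · rw [symFactor_eq_toFinset, symFactor_eq_toFinset]
    have htf : p.parts.toFinset = insert 1 q.parts.toFinset := by
      rw [hp, Multiset.toFinset_add, Multiset.toFinset_replicate, if_neg (by omega)]
      rw [Finset.union_comm, ← Finset.insert_eq]
    rw [htf, Finset.prod_insert (by simpa using hq)]
    rw [hcount1, one_pow, one_mul]
    congr 1
    apply Finset.prod_congr rfl
    intro i hi
    have : i ≠ 1 := fun h => hq (by rw [← h]; exact Multiset.mem_toFinset.mp hi)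
    rw [hcount i this]

lemma partition_heq {a b : ℕ} (h : a = b) (p : Nat.Partition a) (q : Nat.Partition b)
    (hpq : p.parts = q.parts) : HEq p q := by
  subst h
  exact heq_of_eq (Nat.Partition.ext hpq)

/-- The partition of `n - p.parts.count 1` obtained by removing all parts equal to 1. -/
def stripOnes {n : ℕ} (p : n.Partition) : Nat.Partition (n - p.parts.count 1) where
  parts := p.parts.filter (· ≠ 1)
  parts_pos := fun hi => p.parts_pos (Multiset.mem_filter.mp hi).1
  parts_sum := by
    have hsplit : p.parts.filter (· ≠ 1) + p.parts.filter (· = 1) = p.parts := by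
      rw [add_comm]
      exact Multiset.filter_add_not (· = 1) p.parts
    have h1 : p.parts.filter (· = 1) = Multiset.replicate (p.parts.count 1) 1 :=
      Multiset.filter_eq' p.parts 1
    have hsum : (p.parts.filter (· ≠ 1)).sum + p.parts.count 1 = n := by
      have := congrArg Multiset.sum hsplit
      rwa [Multiset.sum_add, h1, Multiset.sum_replicate, smul_eq_mul, mul_one,
        p.parts_sum] at this
    omega

/-- The partition of `n` obtained from `q` (partition of `k`) by adding `n - k` ones. -/
def addOnes {k : ℕ} (n : ℕ) (hk : k ≤ n) (q : Nat.Partition k) : Nat.Partition n where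
  parts := q.parts + Multiset.replicate (n - k) 1
  parts_pos := fun hi => by
    rcases Multiset.mem_add.mp hi with h | h
    · exact q.parts_pos h
    · rw [Multiset.eq_of_mem_replicate h]; norm_num
  parts_sum := by
    rw [Multiset.sum_add, q.parts_sum, Multiset.sum_replicate, smul_eq_mul, mul_one]
    omega

lemma count_one_le {n : ℕ} (p : n.Partition) : p.parts.count 1 ≤ n := by
  calc p.parts.count 1 ≤ Multiset.card p.parts := Multiset.count_le_card _ _
    _ = Multiset.card p.parts • 1 := by rw [smul_eq_mul, mul_one]
    _ ≤ p.parts.sum := Multiset.card_nsmul_le_sum fun x hx => p.parts_pos hx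
    _ = n := p.parts_sum

lemma Z31_eq (n : ℕ) :
    Z31 n = ∑ k ∈ Finset.range n, (n - k).factorial * symSumNoOnes k := by
  classical
  rw [Z31]
  have hrhs : ∑ k ∈ Finset.range n, (n - k).factorial * symSumNoOnes k =
      ∑ x ∈ (Finset.range n).sigma
          (fun k => Finset.univ.filter (fun q : Nat.Partition k => 1 ∉ q.parts)),
        (n - x.1).factorial * symFactor x.2 := by
    rw [Finset.sum_sigma]
    apply Finset.sum_congr rfl
    intro k _
    rw [symSumNoOnes, Finset.mul_sum]
  rw [hrhs]
  refine Finset.sum_bij'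
    (i := fun p hp => ⟨n - p.parts.count 1, stripOnes p⟩)
    (j := fun x hx => addOnes n (by
      have := Finset.mem_sigma.mp hx
      exact Nat.le_of_lt (Finset.mem_range.mp this.1)) x.2)
    ?_ ?_ ?_ ?_ ?_
  · -- hi : maps into sigma
    intro p hp
    simp only [Finset.mem_filter, Finset.mem_univ, true_and] at hp
    refine Finset.mem_sigma.mpr ⟨?_, ?_⟩
    · rw [Finset.mem_range]
      show n - p.parts.count 1 < n
      have h1 : 1 ≤ p.parts.count 1 := Multiset.one_le_count_iff_mem.mpr hp
      have h2 : p.parts.count 1 ≤ n := count_one_le p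
      omega
    · simp only [Finset.mem_filter, Finset.mem_univ, true_and, stripOnes]
      intro h
      exact absurd rfl (Multiset.mem_filter.mp h).2
  · -- hj : maps back
    intro x hx
    simp only [Finset.mem_filter, Finset.mem_univ, true_and, addOnes]
    refine Multiset.mem_add.mpr (Or.inr ?_)
    rw [Multiset.mem_replicate]
    have := Finset.mem_range.mp (Finset.mem_sigma.mp hx).1
    exact ⟨by omega, rfl⟩
  · -- left_inv
    intro p hp
    apply Nat.Partition.ext
    show (stripOnes p).parts + Multiset.replicate (n - (n - p.parts.count 1)) 1 = p.parts
    have hm : p.parts.count 1 ≤ n := count_one_le p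
    rw [Nat.sub_sub_self hm]
    show p.parts.filter (· ≠ 1) + Multiset.replicate (p.parts.count 1) 1 = p.parts
    rw [← Multiset.filter_eq' p.parts 1, add_comm]
    exact Multiset.filter_add_not (· = 1) p.parts
  · -- right_inv
    intro x hx
    obtain ⟨k, q⟩ := x
    have hq : 1 ∉ q.parts := by
      have := (Finset.mem_sigma.mp hx).2
      simpa using this
    have hk : k < n := Finset.mem_range.mp (Finset.mem_sigma.mp hx).1
    have hcount : (addOnes n (Nat.le_of_lt hk) q).parts.count 1 = n - k := by
      show (q.parts + Multiset.replicate (n - k) 1).count 1 = n - k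
      rw [Multiset.count_add, Multiset.count_eq_zero_of_notMem hq,
        Multiset.count_replicate, if_pos rfl, zero_add]
    refine Sigma.ext ?_ ?_
    · show n - (addOnes n (Nat.le_of_lt hk) q).parts.count 1 = k
      rw [hcount]; omega
    · show HEq (stripOnes (addOnes n (Nat.le_of_lt hk) q)) q
      apply partition_heq
      · rw [hcount]; omega
      · show ((addOnes n (Nat.le_of_lt hk) q).parts).filter (· ≠ 1) = q.parts
        show (q.parts + Multiset.replicate (n - k) 1).filter (· ≠ 1) = q.parts
        rw [Multiset.filter_add]
        have h1 : (Multiset.replicate (n - k) 1).filter (· ≠ 1) = 0 := by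
          rw [Multiset.filter_eq_nil]  -- maybe wrong name
          intro a ha
          rw [Multiset.eq_of_mem_replicate ha]
          simp
        have h2 : q.parts.filter (· ≠ 1) = q.parts := by
          rw [Multiset.filter_eq_self]
          intro a ha
          exact fun h => hq (h ▸ ha)
        rw [h1, h2, add_zero]
  · -- values
    intro p hp
    show symFactor p = (n - (n - p.parts.count 1)).factorial * symFactor (stripOnes p)
    have hm : p.parts.count 1 ≤ n := count_one_le p
    rw [Nat.sub_sub_self hm]
    apply symFactor_add_ones (q := stripOnes p)
    · show 1 ∉ p.parts.filter (· ≠ 1)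
      intro h
      exact absurd rfl (Multiset.mem_filter.mp h).2
    · show p.parts = p.parts.filter (· ≠ 1) + Multiset.replicate (p.parts.count 1) 1
      rw [← Multiset.filter_eq' p.parts 1, add_comm]
      exact (Multiset.filter_add_not (· = 1) p.parts).symm

lemma descFactorial_mono_right {n a b : ℕ} (hab : a ≤ b) (hbn : b ≤ n) :
    n.descFactorial a ≤ n.descFactorial b := by
  rw [← Nat.descFactorial_mul_descFactorial hab (n := n)]
  have hpos : 0 < (n - a).descFactorial (b - a) := by
    apply Nat.pos_of_ne_zero
    intro h
    rw [Nat.descFactorial_eq_zero_iff_lt] at h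
    omega
  exact Nat.le_mul_of_pos_left _ hpos

lemma small_term_bound (K k n : ℕ) (hk1 : K + 1 ≤ k) (hk2 : k ≤ 2 * K + 3)
    (hn : 4 * K + 8 ≤ n) :
    n ^ (K + 1) * ((n - k).factorial * symSumNoOnes k) ≤
      (2 ^ (K + 1) * (4 ^ (2 * K + 3) * (K + 1).factorial)) * n.factorial := by
  have hA : symSumNoOnes k ≤ 4 ^ (2 * K + 3) * (K + 1).factorial := by
    calc symSumNoOnes k ≤ 4 ^ k * (k / 2).factorial := symSumNoOnes_le k
      _ ≤ 4 ^ (2 * K + 3) * (K + 1).factorial := by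
          apply Nat.mul_le_mul
          · exact Nat.pow_le_pow_right (by norm_num) hk2
          · exact Nat.factorial_le (by omega)
  have hkn : k ≤ n := by omega
  have hbase : n ^ (K + 1) * (n - k).factorial ≤ 2 ^ (K + 1) * n.factorial := by
    have hd : (n - (K + 1)) ^ (K + 1) ≤ n.descFactorial k := by
      calc (n - (K + 1)) ^ (K + 1) = (n + 1 - (K + 2)) ^ (K + 1) := by
            congr 1; omega
        _ ≤ (n + 1 - (K + 1)) ^ (K + 1) := Nat.pow_le_pow_left (by omega) _
        _ ≤ n.descFactorial (K + 1) := Nat.pow_sub_le_descFactorial n (K + 1)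
        _ ≤ n.descFactorial k := descFactorial_mono_right hk1 hkn
    have hn2 : n ≤ 2 * (n - (K + 1)) := by omega
    calc n ^ (K + 1) * (n - k).factorial
        ≤ (2 * (n - (K + 1))) ^ (K + 1) * (n - k).factorial :=
          Nat.mul_le_mul_right _ (Nat.pow_le_pow_left hn2 _)
      _ = 2 ^ (K + 1) * ((n - (K + 1)) ^ (K + 1) * (n - k).factorial) := by
          rw [mul_pow]; ring
      _ ≤ 2 ^ (K + 1) * (n.descFactorial k * (n - k).factorial) :=
          Nat.mul_le_mul_left _ (Nat.mul_le_mul_right _ hd)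
      _ = 2 ^ (K + 1) * n.factorial := by
          rw [mul_comm (n.descFactorial k), Nat.factorial_mul_descFactorial hkn]
  calc n ^ (K + 1) * ((n - k).factorial * symSumNoOnes k)
      = (n ^ (K + 1) * (n - k).factorial) * symSumNoOnes k := by ring
    _ ≤ (2 ^ (K + 1) * n.factorial) * (4 ^ (2 * K + 3) * (K + 1).factorial) :=
        Nat.mul_le_mul hbase hA
    _ = (2 ^ (K + 1) * (4 ^ (2 * K + 3) * (K + 1).factorial)) * n.factorial := by ring

lemma large_term_bound (K k n : ℕ) (hk1 : 2 * K + 4 ≤ k) (hk2 : k < n) (hn : 64 ≤ n) :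
    n * (n ^ (K + 1) * ((n - k).factorial * symSumNoOnes k)) ≤
      32 ^ (K + 2) * n.factorial := by
  set a := k / 2 with ha
  set j := k - a with hj
  have haj : a + j = k := by omega
  have hjK : K + 2 ≤ j := by omega
  have h2j : 2 * j ≤ n := by omega
  have hA : symSumNoOnes k ≤ 4 ^ k * a.factorial := symSumNoOnes_le k
  have hfact : a.factorial * (n - k).factorial ≤ (n - j).factorial := by
    have hdvd : a.factorial * (n - k).factorial ∣ (a + (n - k)).factorial :=
      Nat.factorial_mul_factorial_dvd_factorial_add a (n - k)
    have he : a + (n - k) = n - j := by omega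
    rw [he] at hdvd
    exact Nat.le_of_dvd (Nat.factorial_pos _) hdvd
  set b := n + 1 - j with hb
  have hd : b ^ j ≤ n.descFactorial j := Nat.pow_sub_le_descFactorial n j
  have hnb : n ≤ 2 * b := by omega
  have h16b : 16 ≤ b := by omega
  have hkey : n ^ (K + 2) * 4 ^ k ≤ 32 ^ (K + 2) * b ^ j := by
    calc n ^ (K + 2) * 4 ^ k
        ≤ (2 * b) ^ (K + 2) * 4 ^ (2 * j) := by
          apply Nat.mul_le_mul
          · exact Nat.pow_le_pow_left hnb _
          · exact Nat.pow_le_pow_right (by norm_num) (by omega)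
      _ = 2 ^ (K + 2) * b ^ (K + 2) * 16 ^ j := by
          rw [mul_pow, pow_mul]; norm_num
      _ = 2 ^ (K + 2) * b ^ (K + 2) * (16 ^ (K + 2) * 16 ^ (j - (K + 2))) := by
          rw [← pow_add]; congr 2; omega
      _ ≤ 2 ^ (K + 2) * b ^ (K + 2) * (16 ^ (K + 2) * b ^ (j - (K + 2))) := by
          apply Nat.mul_le_mul_left
          apply Nat.mul_le_mul_left
          exact Nat.pow_le_pow_left h16b _
      _ = 32 ^ (K + 2) * (b ^ (K + 2) * b ^ (j - (K + 2))) := by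
          have : (32 : ℕ) ^ (K + 2) = 2 ^ (K + 2) * 16 ^ (K + 2) := by
            rw [← Nat.mul_pow]
          rw [this]; ring
      _ = 32 ^ (K + 2) * b ^ j := by rw [← pow_add]; congr 2; omega
  have hjn : j ≤ n := by omega
  calc n * (n ^ (K + 1) * ((n - k).factorial * symSumNoOnes k))
      ≤ n * (n ^ (K + 1) * ((n - k).factorial * (4 ^ k * a.factorial))) := by
        apply Nat.mul_le_mul_left
        apply Nat.mul_le_mul_left
        exact Nat.mul_le_mul_left _ hA
    _ = (n ^ (K + 2) * 4 ^ k) * (a.factorial * (n - k).factorial) := by ring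
    _ ≤ (32 ^ (K + 2) * b ^ j) * (n - j).factorial := Nat.mul_le_mul hkey hfact
    _ ≤ (32 ^ (K + 2) * n.descFactorial j) * (n - j).factorial := by
        apply Nat.mul_le_mul_right
        exact Nat.mul_le_mul_left _ hd
    _ = 32 ^ (K + 2) * n.factorial := by
        rw [mul_assoc, mul_comm (n.descFactorial j), Nat.factorial_mul_descFactorial hjn]

lemma tail_decomp (K n : ℕ) (hn : K + 1 ≤ n) :
    Z31 n = S31 K n + ∑ k ∈ Finset.Ico (K + 1) n, (n - k).factorial * symSumNoOnes k := by
  rw [Z31_eq, S31, Finset.range_eq_Ico,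
    ← Finset.sum_Ico_consecutive _ (Nat.zero_le (K + 1)) hn, ← Finset.range_eq_Ico]

lemma main_nat_bound (K n : ℕ) (hn : 4 * K + 72 ≤ n) :
    n ^ (K + 1) * (Z31 n - S31 K n) ≤
      ((K + 3) * (2 ^ (K + 1) * (4 ^ (2 * K + 3) * (K + 1).factorial)) + 32 ^ (K + 2)) *
        n.factorial := by
  have hKn : K + 1 ≤ n := by omega
  have hdec := tail_decomp K n hKn
  have hdiff : Z31 n - S31 K n =
      ∑ k ∈ Finset.Ico (K + 1) n, (n - k).factorial * symSumNoOnes k := by omega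
  rw [hdiff]
  have hsplit : Finset.Ico (K + 1) n =
      Finset.Ico (K + 1) (2 * K + 4) ∪ Finset.Ico (2 * K + 4) n := by
    rw [Finset.Ico_union_Ico_eq_Ico (by omega) (by omega)]
  rw [hsplit, Finset.sum_union (by
    apply Finset.Ico_disjoint_Ico_consecutive)]
  rw [Nat.mul_add, Nat.add_mul]
  apply Nat.add_le_add
  · -- small part
    rw [Finset.mul_sum]
    calc ∑ k ∈ Finset.Ico (K + 1) (2 * K + 4),
          n ^ (K + 1) * ((n - k).factorial * symSumNoOnes k)
        ≤ ∑ _k ∈ Finset.Ico (K + 1) (2 * K + 4),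
            (2 ^ (K + 1) * (4 ^ (2 * K + 3) * (K + 1).factorial)) * n.factorial := by
          apply Finset.sum_le_sum
          intro k hk
          rw [Finset.mem_Ico] at hk
          exact small_term_bound K k n hk.1 (by omega) (by omega)
      _ = (K + 3) * ((2 ^ (K + 1) * (4 ^ (2 * K + 3) * (K + 1).factorial)) * n.factorial) := by
          rw [Finset.sum_const, Nat.card_Ico, smul_eq_mul]
          congr 1
          omega
      _ = (K + 3) * (2 ^ (K + 1) * (4 ^ (2 * K + 3) * (K + 1).factorial)) * n.factorial := by
          ring
  · -- large part
    have hnpos : 0 < n := by omega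
    refine Nat.le_of_mul_le_mul_left ?_ hnpos
    rw [Finset.mul_sum, Finset.mul_sum]
    calc ∑ k ∈ Finset.Ico (2 * K + 4) n,
          n * (n ^ (K + 1) * ((n - k).factorial * symSumNoOnes k))
        ≤ ∑ _k ∈ Finset.Ico (2 * K + 4) n, 32 ^ (K + 2) * n.factorial := by
          apply Finset.sum_le_sum
          intro k hk
          rw [Finset.mem_Ico] at hk
          exact large_term_bound K k n hk.1 hk.2 (by omega)
      _ = (Finset.Ico (2 * K + 4) n).card * (32 ^ (K + 2) * n.factorial) := by
          rw [Finset.sum_const, smul_eq_mul]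
      _ ≤ n * (32 ^ (K + 2) * n.factorial) := by
          apply Nat.mul_le_mul_right
          rw [Nat.card_Ico]
          omega

/-- For every fixed `K ≥ 0`,
`lim_{n→∞} n^K · (Z_{3;1}(n)/n! − S_{3;1;K}(n)/n!) = 0`. -/
theorem Z31_asymptotic_expansion (K : ℕ) :
    Tendsto (fun n : ℕ =>
      (n : ℝ) ^ K * ((Z31 n : ℝ) / (n.factorial : ℝ) - (S31 K n : ℝ) / (n.factorial : ℝ)))
      atTop (nhds 0) := by
  set C : ℕ := (K + 3) * (2 ^ (K + 1) * (4 ^ (2 * K + 3) * (K + 1).factorial)) + 32 ^ (K + 2)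
    with hC
  have h0 : Tendsto (fun n : ℕ => (C : ℝ) / n) atTop (nhds 0) :=
    tendsto_const_div_atTop_nhds_zero_nat _
  apply squeeze_zero' ?_ ?_ h0
  · filter_upwards [eventually_ge_atTop (4 * K + 72)] with n hn
    have hKn : K + 1 ≤ n := by omega
    have hle : S31 K n ≤ Z31 n := by
      have := tail_decomp K n hKn
      omega
    have h1 : (S31 K n : ℝ) / (n.factorial : ℝ) ≤ (Z31 n : ℝ) / (n.factorial : ℝ) := by
      gcongr
      try exact_mod_cast hle
    have h2 : (0 : ℝ) ≤ (n : ℝ) ^ K := by positivity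
    nlinarith [sub_nonneg.mpr h1]
  · filter_upwards [eventually_ge_atTop (4 * K + 72)] with n hn
    have hKn : K + 1 ≤ n := by omega
    have hle : S31 K n ≤ Z31 n := by
      have := tail_decomp K n hKn
      omega
    have hnat := main_nat_bound K n hn
    have hfpos : (0 : ℝ) < (n.factorial : ℝ) := by
      exact_mod_cast Nat.factorial_pos n
    have hnpos : (0 : ℝ) < (n : ℝ) := by
      have : 0 < n := by omega
      exact_mod_cast this
    rw [← sub_div, ← mul_div_assoc, div_le_div_iff₀ hfpos hnpos]
    have hcast : (n : ℝ) ^ (K + 1) * ((Z31 n : ℝ) - (S31 K n : ℝ)) ≤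
        (C : ℝ) * (n.factorial : ℝ) := by
      have := hnat
      have h3 : ((n ^ (K + 1) * (Z31 n - S31 K n) : ℕ) : ℝ) ≤ ((C * n.factorial : ℕ) : ℝ) := by
        exact_mod_cast this
      rw [Nat.cast_mul, Nat.cast_mul, Nat.cast_sub hle, Nat.cast_pow] at h3
      exact h3
    calc (n : ℝ) ^ K * ((Z31 n : ℝ) - (S31 K n : ℝ)) * (n : ℝ)
        = (n : ℝ) ^ (K + 1) * ((Z31 n : ℝ) - (S31 K n : ℝ)) := by ring
      _ ≤ (C : ℝ) * (n.factorial : ℝ) := hcast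
end

section
/- For every even integer k ≥ 0 and every partition q of k with no part equal to 1, Sym(q) ≤ 2^{k/2} · (k/2)!, i.e. the partition [2^{k/2}] consisting of k/2 parts equal to 2 maximizes the symmetry factor among partitions of k with all parts at least 2. -/
open Finset

namespace SymFactorAux

/-- `g n = 2^⌈n/2⌉ * ⌊n/2⌋!`; for even `n = 2a` this is `2^a * a!`. -/
def g (n : ℕ) : ℕ := 2 ^ ((n + 1) / 2) * (n / 2).factorial

lemma g_eval (n a : ℕ) (h1 : (n + 1) / 2 = a) (h2 : n / 2 = a) :
    g n = 2 ^ a * a.factorial := by rw [g, h1, h2]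

lemma g_eval_odd (n a : ℕ) (h1 : (n + 1) / 2 = a + 1) (h2 : n / 2 = a) :
    g n = 2 ^ (a + 1) * a.factorial := by rw [g, h1, h2]

lemma fact_mul_fact_le (a b : ℕ) : a.factorial * b.factorial ≤ (a + b).factorial :=
  Nat.le_of_dvd (a + b).factorial_pos (Nat.factorial_mul_factorial_dvd_factorial_add a b)

lemma key (p q a m X : ℕ) (ha : a ≤ m) (hX : X ≤ 2 ^ q * (m + 1)) :
    X * (2 ^ p * a.factorial) ≤ 2 ^ (p + q) * (m + 1).factorial := by
  calc X * (2 ^ p * a.factorial) ≤ (2 ^ q * (m + 1)) * (2 ^ p * a.factorial) :=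
        Nat.mul_le_mul_right _ hX
    _ = 2 ^ (p + q) * ((m + 1) * a.factorial) := by ring
    _ ≤ 2 ^ (p + q) * (m + 1).factorial := by
        apply Nat.mul_le_mul_left
        rw [Nat.factorial_succ]
        exact Nat.mul_le_mul_left _ (Nat.factorial_le ha)

lemma one_le_two_pow (q : ℕ) : 1 ≤ 2 ^ q := Nat.one_le_two_pow

/-- the key step: multiplying by the (even-compatible) new total. -/
lemma step (n i : ℕ) (hi : 2 ≤ i) (h : Even n ∨ 3 ≤ i) :
    (n + i) * g n ≤ g (n + i) := by
  rcases Nat.even_or_odd n with ⟨a, rfl⟩ | ⟨a, rfl⟩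
  · rcases Nat.even_or_odd i with ⟨b, rfl⟩ | ⟨b, rfl⟩
    · -- n = 2a, i = 2b, b ≥ 1
      obtain ⟨c, rfl⟩ : ∃ c, b = c + 1 := ⟨b - 1, by omega⟩
      rw [g_eval (a + a) a (by omega) (by omega),
          g_eval (a + a + (c + 1 + (c + 1))) (a + c + 1) (by omega) (by omega)]
      have h2 : (2:ℕ) ≤ 2 ^ (c + 1) := Nat.one_lt_two_pow_iff.mpr (by omega)
      calc (a + a + (c + 1 + (c + 1))) * (2 ^ a * a.factorial)
          ≤ 2 ^ (a + (c + 1)) * (a + c + 1).factorial :=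
            key a (c + 1) a (a + c) (a + a + (c + 1 + (c + 1))) (by omega) (by nlinarith)
        _ = 2 ^ (a + c + 1) * (a + c + 1).factorial := by ring_nf
    · -- n = 2a, i = 2b+1, with 3 ≤ i so b ≥ 1
      have hb : 1 ≤ b := by omega
      obtain ⟨c, rfl⟩ : ∃ c, b = c + 1 := ⟨b - 1, by omega⟩
      rw [g_eval (a + a) a (by omega) (by omega),
          g_eval_odd (a + a + (2 * (c + 1) + 1)) (a + c + 1) (by omega) (by omega)]
      have h2 : (4:ℕ) ≤ 2 ^ (c + 2) := by
        calc (4:ℕ) = 2 ^ 2 := by norm_num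
          _ ≤ 2 ^ (c + 2) := Nat.pow_le_pow_right (by norm_num) (by omega)
      calc (a + a + (2 * (c + 1) + 1)) * (2 ^ a * a.factorial)
          ≤ 2 ^ (a + (c + 2)) * (a + c + 1).factorial :=
            key a (c + 2) a (a + c) (a + a + (2 * (c + 1) + 1)) (by omega) (by nlinarith)
        _ = 2 ^ (a + c + 1 + 1) * (a + c + 1).factorial := by ring_nf
  · rcases Nat.even_or_odd i with ⟨b, rfl⟩ | ⟨b, rfl⟩
    · -- n = 2a+1, i = 2b even: hypothesis forces 3 ≤ i, so b ≥ 2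
      have hb : 2 ≤ b := by
        rcases h with ⟨r, hr⟩ | h <;> omega
      obtain ⟨c, rfl⟩ : ∃ c, b = c + 2 := ⟨b - 2, by omega⟩
      rw [g_eval_odd (2 * a + 1) a (by omega) (by omega),
          g_eval_odd (2 * a + 1 + (c + 2 + (c + 2))) (a + c + 2) (by omega) (by omega)]
      have h2 : (4:ℕ) ≤ 2 ^ (c + 2) := by
        calc (4:ℕ) = 2 ^ 2 := by norm_num
          _ ≤ 2 ^ (c + 2) := Nat.pow_le_pow_right (by norm_num) (by omega)
      calc (2 * a + 1 + (c + 2 + (c + 2))) * (2 ^ (a + 1) * a.factorial)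
          ≤ 2 ^ ((a + 1) + (c + 2)) * (a + c + 2).factorial :=
            key (a + 1) (c + 2) a (a + c + 1) (2 * a + 1 + (c + 2 + (c + 2))) (by omega) (by nlinarith)
        _ = 2 ^ (a + c + 2 + 1) * (a + c + 2).factorial := by ring_nf
    · -- n = 2a+1, i = 2b+1, b ≥ 1
      obtain ⟨c, rfl⟩ : ∃ c, b = c + 1 := ⟨b - 1, by omega⟩
      rw [g_eval_odd (2 * a + 1) a (by omega) (by omega),
          g_eval (2 * a + 1 + (2 * (c + 1) + 1)) (a + c + 2) (by omega) (by omega)]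
      have h2 : (2:ℕ) ≤ 2 ^ (c + 1) := Nat.one_lt_two_pow_iff.mpr (by omega)
      calc (2 * a + 1 + (2 * (c + 1) + 1)) * (2 ^ (a + 1) * a.factorial)
          ≤ 2 ^ ((a + 1) + (c + 1)) * (a + c + 2).factorial :=
            key (a + 1) (c + 1) a (a + c + 1) (2 * a + 1 + (2 * (c + 1) + 1)) (by omega) (by nlinarith)
        _ = 2 ^ (a + c + 2) * (a + c + 2).factorial := by ring_nf

/-- Per-cycle-size bound: `i^t · t! ≤ g (i t)` for `i ≥ 2`. -/
lemma pow_mul_factorial_le (i : ℕ) (hi : 2 ≤ i) : ∀ t, i ^ t * t.factorial ≤ g (i * t)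
  | 0 => by simp [g]
  | (t + 1) => by
      have h1 := pow_mul_factorial_le i hi t
      have hside : Even (i * t) ∨ 3 ≤ i := by
        by_cases h3 : 3 ≤ i
        · exact Or.inr h3
        · have : i = 2 := by omega
          subst this
          exact Or.inl ⟨t, by ring⟩
      calc i ^ (t + 1) * (t + 1).factorial
          = (i * t + i) * (i ^ t * t.factorial) := by rw [Nat.factorial_succ]; ring
        _ ≤ (i * t + i) * g (i * t) := Nat.mul_le_mul_left _ h1
        _ ≤ g (i * t + i) := step (i * t) i hi hside
        _ = g (i * (t + 1)) := by ring_nf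

/-- Supermultiplicativity of `g` away from `1`. -/
lemma g_mul_g_le (x y : ℕ) (hx : x ≠ 1) (hy : y ≠ 1) : g x * g y ≤ g (x + y) := by
  rcases Nat.even_or_odd x with ⟨a, rfl⟩ | ⟨a, rfl⟩
  · rcases Nat.even_or_odd y with ⟨b, rfl⟩ | ⟨b, rfl⟩
    · rw [g_eval (a + a) a (by omega) (by omega),
          g_eval (b + b) b (by omega) (by omega),
          g_eval (a + a + (b + b)) (a + b) (by omega) (by omega)]
      calc 2 ^ a * a.factorial * (2 ^ b * b.factorial)
          = 2 ^ (a + b) * (a.factorial * b.factorial) := by ring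
        _ ≤ 2 ^ (a + b) * (a + b).factorial :=
            Nat.mul_le_mul_left _ (fact_mul_fact_le a b)
    · rw [g_eval (a + a) a (by omega) (by omega),
          g_eval_odd (2 * b + 1) b (by omega) (by omega),
          g_eval_odd (a + a + (2 * b + 1)) (a + b) (by omega) (by omega)]
      calc 2 ^ a * a.factorial * (2 ^ (b + 1) * b.factorial)
          = 2 ^ (a + b + 1) * (a.factorial * b.factorial) := by ring
        _ ≤ 2 ^ (a + b + 1) * (a + b).factorial :=
            Nat.mul_le_mul_left _ (fact_mul_fact_le a b)
  · rcases Nat.even_or_odd y with ⟨b, rfl⟩ | ⟨b, rfl⟩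
    · rw [g_eval_odd (2 * a + 1) a (by omega) (by omega),
          g_eval (b + b) b (by omega) (by omega),
          g_eval_odd (2 * a + 1 + (b + b)) (a + b) (by omega) (by omega)]
      calc 2 ^ (a + 1) * a.factorial * (2 ^ b * b.factorial)
          = 2 ^ (a + b + 1) * (a.factorial * b.factorial) := by ring
        _ ≤ 2 ^ (a + b + 1) * (a + b).factorial :=
            Nat.mul_le_mul_left _ (fact_mul_fact_le a b)
    · -- both odd, a ≥ 1 and b ≥ 1
      have ha : 1 ≤ a := by omega
      have hb : 1 ≤ b := by omega
      rw [g_eval_odd (2 * a + 1) a (by omega) (by omega),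
          g_eval_odd (2 * b + 1) b (by omega) (by omega),
          g_eval (2 * a + 1 + (2 * b + 1)) (a + b + 1) (by omega) (by omega)]
      have h3 : 2 * (a.factorial * b.factorial) ≤ (a + b + 1).factorial := by
        calc 2 * (a.factorial * b.factorial) ≤ 2 * (a + b).factorial :=
              Nat.mul_le_mul_left _ (fact_mul_fact_le a b)
          _ ≤ (a + b + 1) * (a + b).factorial := Nat.mul_le_mul_right _ (by omega)
          _ = (a + b + 1).factorial := (Nat.factorial_succ _).symm
      calc 2 ^ (a + 1) * a.factorial * (2 ^ (b + 1) * b.factorial)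
          = 2 ^ (a + b + 1) * (2 * (a.factorial * b.factorial)) := by ring
        _ ≤ 2 ^ (a + b + 1) * (a + b + 1).factorial := Nat.mul_le_mul_left _ h3

lemma sum_ne_one {ι : Type*} {s : Finset ι} {f : ι → ℕ} (hf : ∀ i ∈ s, f i ≠ 1) :
    (∑ i ∈ s, f i) ≠ 1 := by
  intro h
  have h0 : ∀ i ∈ s, f i = 0 := by
    intro i hi
    have h1 := Finset.single_le_sum (f := f) (fun j _ => Nat.zero_le (f j)) hi
    have h2 := hf i hi
    omega
  rw [Finset.sum_eq_zero h0] at h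
  exact absurd h (by norm_num)

lemma prod_g_le {ι : Type*} (f : ι → ℕ) :
    ∀ s : Finset ι, (∀ i ∈ s, f i ≠ 1) →
      ∏ i ∈ s, g (f i) ≤ g (∑ i ∈ s, f i) := by
  intro s
  induction s using Finset.cons_induction with
  | empty => intro _; simp [g]
  | cons a s ha ih =>
      intro hf
      rw [Finset.prod_cons, Finset.sum_cons]
      have h1 := ih (fun i hi => hf i (Finset.mem_cons_of_mem hi))
      calc g (f a) * ∏ i ∈ s, g (f i) ≤ g (f a) * g (∑ i ∈ s, f i) :=
            Nat.mul_le_mul_left _ h1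
        _ ≤ g (f a + ∑ i ∈ s, f i) :=
            g_mul_g_le _ _ (hf a (Finset.mem_cons_self a s))
              (sum_ne_one fun i hi => hf i (Finset.mem_cons_of_mem hi))

end SymFactorAux

open SymFactorAux in
/-- For every even `k ≥ 0` and every partition `q` of `k` with no part equal to 1,
`Sym(q) ≤ 2^(k/2) · (k/2)!`, i.e. the partition `[2^(k/2)]` maximizes the symmetry
factor among partitions of `k` with all parts at least 2. -/
theorem symFactor_le_of_even (k : ℕ) (hk : Even k) (q : Nat.Partition k)
    (hq : 1 ∉ q.parts) :
    symFactor q ≤ 2 ^ (k / 2) * (k / 2).factorial := by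
  obtain ⟨m, rfl⟩ := hk
  set c : ℕ → ℕ := fun i => q.parts.count i with hc
  have hterm : ∀ i ∈ Finset.range (m + m + 1),
      i ^ c i * (c i).factorial ≤ g (c i * i) := by
    intro i _
    rcases Nat.lt_or_ge i 2 with h2 | h2
    · interval_cases i
      · have h0 : c 0 = 0 := by
          simp only [hc]
          exact Multiset.count_eq_zero_of_notMem fun hmem =>
            absurd (q.parts_pos hmem) (by omega)
        simp [h0, g]
      · have h0 : c 1 = 0 := by
          simp only [hc]
          exact Multiset.count_eq_zero_of_notMem hq
        simp [h0, g]
    · have := pow_mul_factorial_le i h2 (c i)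
      rwa [mul_comm i (c i)] at this
  have hne : ∀ i ∈ Finset.range (m + m + 1), c i * i ≠ 1 := by
    intro i _
    rcases Nat.lt_or_ge i 2 with h2 | h2
    · interval_cases i
      · simp
      · have h0 : c 1 = 0 := Multiset.count_eq_zero_of_notMem hq
        simp [h0]
    · rcases Nat.eq_zero_or_pos (c i) with h0 | h0
      · simp [h0]
      · have : 2 ≤ c i * i := le_trans h2 (Nat.le_mul_of_pos_left i h0)
        omega
  have hsum : ∑ i ∈ Finset.range (m + m + 1), c i * i = m + m := by
    have hsub : q.parts.toFinset ⊆ Finset.range (m + m + 1) := by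
      intro i hi
      rw [Multiset.mem_toFinset] at hi
      have h1 : i ≤ q.parts.sum :=
        Multiset.single_le_sum (fun x _ => Nat.zero_le x) i hi
      rw [q.parts_sum] at h1
      exact Finset.mem_range.mpr (by omega)
    have := Finset.sum_multiset_count_of_subset q.parts _ hsub
    rw [q.parts_sum] at this
    simpa [smul_eq_mul] using this.symm
  calc symFactor q ≤ ∏ i ∈ Finset.range (m + m + 1), g (c i * i) := by
        unfold symFactor
        exact Finset.prod_le_prod (fun i _ => Nat.zero_le _) hterm
    _ ≤ g (∑ i ∈ Finset.range (m + m + 1), c i * i) := prod_g_le _ _ hne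
    _ = g (m + m) := by rw [hsum]
    _ = 2 ^ ((m + m) / 2) * ((m + m) / 2).factorial := by
        rw [g_eval (m + m) m (by omega) (by omega)]
        rw [show (m + m) / 2 = m by omega]
end

section
/- For every odd integer k ≥ 11 and every partition q of k with no part equal to 1, Sym(q) ≤ 3 · 2^{(k−3)/2} · ((k−3)/2)!, i.e. the partition [3, 2^{(k−3)/2}] consisting of one part equal to 3 and (k−3)/2 parts equal to 2 maximizes the symmetry factor among partitions of k with all parts at least 2. -/
open Finset

/-- Formula version of the max symmetry factor. -/
def Ffor (n : ℕ) : ℕ :=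
  if Even n then 2 ^ (n / 2) * (n / 2).factorial
  else 3 * 2 ^ ((n - 3) / 2) * ((n - 3) / 2).factorial

/-- Max symmetry factor among fixed-point-free partitions (with the n = 9 exception). -/
def Fc (n : ℕ) : ℕ := if n = 9 then 162 else Ffor n

lemma Ffor_even (x : ℕ) : Ffor (2 * x) = 2 ^ x * x.factorial := by
  unfold Ffor
  rw [if_pos ⟨x, by ring⟩, Nat.mul_div_cancel_left _ (by norm_num)]

lemma Ffor_odd (x : ℕ) : Ffor (2 * x + 3) = 3 * 2 ^ x * x.factorial := by
  unfold Ffor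
  rw [if_neg (by simp [Nat.even_iff])]
  have h1 : (2 * x + 3 - 3) / 2 = x := by omega
  rw [h1]

lemma Fc_even (x : ℕ) : Fc (2 * x) = 2 ^ x * x.factorial := by
  unfold Fc
  rw [if_neg (by omega), Ffor_even]

lemma Fc_odd (x : ℕ) (hx : x ≠ 3) : Fc (2 * x + 3) = 3 * 2 ^ x * x.factorial := by
  unfold Fc
  rw [if_neg (by omega), Ffor_odd]

lemma Fc_zero : Fc 0 = 1 := by simp [Fc, Ffor]

lemma Fc_nine : Fc 9 = 162 := rfl

lemma Ffor_le_Fc (n : ℕ) : Ffor n ≤ Fc n := by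
  unfold Fc
  split
  · subst n
    show Ffor (2 * 3 + 3) ≤ 162
    rw [Ffor_odd]
    norm_num [Nat.factorial]
  · exact le_rfl

lemma fact_mul_fact_le (x y : ℕ) : x.factorial * y.factorial ≤ (x + y).factorial :=
  Nat.le_of_dvd (Nat.factorial_pos _) (Nat.factorial_mul_factorial_dvd_factorial_add x y)

lemma fact3 (m : ℕ) : (m + 3).factorial = (m + 1) * (m + 2) * (m + 3) * m.factorial := by
  rw [show m + 3 = (m + 2) + 1 from rfl, Nat.factorial_succ,
      show m + 2 = (m + 1) + 1 from rfl, Nat.factorial_succ, Nat.factorial_succ]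
  ring

lemma six_fact (m : ℕ) : 6 * m.factorial ≤ (m + 3).factorial := by
  rw [fact3]
  have h : 6 ≤ (m + 1) * (m + 2) * (m + 3) :=
    calc (6:ℕ) = 1 * 2 * 3 := rfl
      _ ≤ (m + 1) * (m + 2) * (m + 3) :=
        Nat.mul_le_mul (Nat.mul_le_mul (by omega) (by omega)) (by omega)
  exact Nat.mul_le_mul_right _ h

lemma pow_mul_fact_le (j : ℕ) (hj : 1 ≤ j) : ∀ a, j ^ a * a.factorial ≤ (j * a).factorial := by
  intro a
  induction a with
  | zero => simp
  | succ a ih =>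
      obtain ⟨c, rfl⟩ : ∃ c, j = c + 1 := ⟨j - 1, by omega⟩
      have h1 : ((c + 1) * a).factorial * ((c + 1) * (a + 1)) ≤ ((c + 1) * (a + 1)).factorial := by
        have he : (c + 1) * (a + 1) = ((c + 1) * a + c) + 1 := by ring
        rw [he, Nat.factorial_succ]
        calc ((c + 1) * a).factorial * ((c + 1) * a + c + 1)
            ≤ ((c + 1) * a + c).factorial * ((c + 1) * a + c + 1) :=
              Nat.mul_le_mul_right _ (Nat.factorial_le (by omega))
          _ = ((c + 1) * a + c + 1) * ((c + 1) * a + c).factorial := by ring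
      calc (c + 1) ^ (a + 1) * (a + 1).factorial
          = ((c + 1) ^ a * a.factorial) * ((c + 1) * (a + 1)) := by
            rw [Nat.factorial_succ]; ring
        _ ≤ ((c + 1) * a).factorial * ((c + 1) * (a + 1)) := Nat.mul_le_mul_right _ ih
        _ ≤ ((c + 1) * (a + 1)).factorial := h1

lemma sq_le_two_pow (i : ℕ) (hi : 5 ≤ i) : i ^ 2 ≤ 2 ^ i := by
  induction i, hi using Nat.le_induction with
  | base => norm_num
  | succ i hi ih =>
      have h1 : (i + 1) ^ 2 ≤ 2 * i ^ 2 := by nlinarith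
      calc (i + 1) ^ 2 ≤ 2 * i ^ 2 := h1
        _ ≤ 2 * 2 ^ i := Nat.mul_le_mul_left _ ih
        _ = 2 ^ (i + 1) := by ring

lemma two_c_le (c : ℕ) : 2 * c + 3 ≤ 3 * 2 ^ c := by
  have h1 : c + 1 ≤ 2 ^ c := Nat.lt_two_pow_self (n := c)
  omega

lemma nine_pow_even (b : ℕ) : 9 ^ b * (2 * b).factorial ≤ 8 ^ b * (3 * b).factorial := by
  induction b with
  | zero => simp
  | succ b ih =>
      rw [show 2 * (b + 1) = (2 * b + 1) + 1 by ring, Nat.factorial_succ, Nat.factorial_succ,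
          show 3 * (b + 1) = (3 * b + 2) + 1 by ring, Nat.factorial_succ,
          show 3 * b + 2 = (3 * b + 1) + 1 from rfl, Nat.factorial_succ, Nat.factorial_succ]
      calc 9 ^ (b + 1) * ((2 * b + 1 + 1) * ((2 * b + 1) * (2 * b).factorial))
          = (9 * ((2 * b + 2) * (2 * b + 1))) * (9 ^ b * (2 * b).factorial) := by ring
        _ ≤ (9 * ((2 * b + 2) * (2 * b + 1))) * (8 ^ b * (3 * b).factorial) :=
            Nat.mul_le_mul_left _ ih
        _ ≤ (8 * ((3 * b + 3) * ((3 * b + 2) * (3 * b + 1)))) * (8 ^ b * (3 * b).factorial) :=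
            Nat.mul_le_mul_right _ (by
              have h1 : (2 * b + 2) * (2 * b + 1) ≤ (3 * b + 2) * (3 * b + 1) :=
                Nat.mul_le_mul (by omega) (by omega)
              calc 9 * ((2 * b + 2) * (2 * b + 1))
                  ≤ (8 * (3 * b + 3)) * ((3 * b + 2) * (3 * b + 1)) :=
                    Nat.mul_le_mul (by omega) h1
                _ = 8 * ((3 * b + 3) * ((3 * b + 2) * (3 * b + 1))) := by ring)
        _ = 8 ^ (b + 1) * ((3 * b + 1 + 1 + 1) * ((3 * b + 1 + 1) * ((3 * b + 1) * (3 * b).factorial))) := by ring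

lemma nine_pow_odd (b : ℕ) (hb : 2 ≤ b) :
    9 ^ b * (2 * b + 1).factorial ≤ 8 ^ b * (3 * b).factorial := by
  induction b, hb using Nat.le_induction with
  | base => norm_num [Nat.factorial]
  | succ b hb ih =>
      rw [show 2 * (b + 1) + 1 = (2 * b + 2) + 1 by ring, Nat.factorial_succ,
          show 2 * b + 2 = (2 * b + 1) + 1 from rfl, Nat.factorial_succ,
          show 3 * (b + 1) = (3 * b + 2) + 1 by ring, Nat.factorial_succ,
          show 3 * b + 2 = (3 * b + 1) + 1 from rfl, Nat.factorial_succ, Nat.factorial_succ]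
      calc 9 ^ (b + 1) * ((2 * b + 2 + 1) * ((2 * b + 1 + 1) * (2 * b + 1).factorial))
          = (9 * ((2 * b + 3) * (2 * b + 2))) * (9 ^ b * (2 * b + 1).factorial) := by ring
        _ ≤ (9 * ((2 * b + 3) * (2 * b + 2))) * (8 ^ b * (3 * b).factorial) :=
            Nat.mul_le_mul_left _ ih
        _ ≤ (8 * ((3 * b + 3) * ((3 * b + 2) * (3 * b + 1)))) * (8 ^ b * (3 * b).factorial) :=
            Nat.mul_le_mul_right _ (by
              have h1 : (2 * b + 3) * (2 * b + 2) ≤ (3 * b + 2) * (3 * b + 1) :=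
                Nat.mul_le_mul (by omega) (by omega)
              calc 9 * ((2 * b + 3) * (2 * b + 2))
                  ≤ (8 * (3 * b + 3)) * ((3 * b + 2) * (3 * b + 1)) :=
                    Nat.mul_le_mul (by omega) h1
                _ = 8 * ((3 * b + 3) * ((3 * b + 2) * (3 * b + 1))) := by ring)
        _ = 8 ^ (b + 1) * ((3 * b + 1 + 1 + 1) * ((3 * b + 1 + 1) * ((3 * b + 1) * (3 * b).factorial))) := by ring

lemma blockbound (i a : ℕ) (hi : 2 ≤ i) : i ^ a * a.factorial ≤ Fc (i * a) := by
  rcases Nat.eq_zero_or_pos a with rfl | ha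
  · simp [Fc, Ffor]
  by_cases h9 : i * a = 9
  · have hcase : (i = 3 ∧ a = 3) ∨ (i = 9 ∧ a = 1) := by
      have hi9 : i ≤ 9 := by nlinarith
      interval_cases i <;> omega
    rw [h9, Fc_nine]
    rcases hcase with ⟨rfl, rfl⟩ | ⟨rfl, rfl⟩ <;> norm_num [Nat.factorial]
  rcases Nat.even_or_odd i with ⟨j, hj⟩ | ⟨c0, hc0⟩
  · -- i even, i = 2*j with j ≥ 1
    obtain ⟨j, rfl⟩ : ∃ j', i = 2 * j' := ⟨j, by omega⟩
    have hj1 : 1 ≤ j := by omega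
    have he : 2 * j * a = 2 * (j * a) := by ring
    rw [he, Fc_even]
    calc (2 * j) ^ a * a.factorial = 2 ^ a * (j ^ a * a.factorial) := by
          rw [mul_pow]; ring
      _ ≤ 2 ^ a * (j * a).factorial := Nat.mul_le_mul_left _ (pow_mul_fact_le j hj1 a)
      _ ≤ 2 ^ (j * a) * (j * a).factorial :=
          Nat.mul_le_mul_right _ (Nat.pow_le_pow_right (by norm_num) (Nat.le_mul_of_pos_left a hj1))
  · -- i odd, i = 2*c+3 with c ≥ 0
    obtain ⟨c, rfl⟩ : ∃ c', i = 2 * c' + 3 := ⟨c0 - 1, by omega⟩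
    rcases Nat.even_or_odd a with ⟨b, hb⟩ | ⟨b, hb⟩
    · -- a even, a = 2*b
      obtain ⟨b, rfl⟩ : ∃ b', a = 2 * b' := ⟨b, by omega⟩
      have he : (2 * c + 3) * (2 * b) = 2 * ((2 * c + 3) * b) := by ring
      rw [he, Fc_even]
      rcases Nat.eq_zero_or_pos c with rfl | hc
      · -- i = 3
        have h8 : (8 : ℕ) ^ b = 2 ^ (3 * b) := by
          rw [show (8:ℕ) = 2 ^ 3 from rfl, ← pow_mul]
        calc (2 * 0 + 3) ^ (2 * b) * (2 * b).factorial
            = 9 ^ b * (2 * b).factorial := by rw [show (2*0+3 : ℕ) = 3 from rfl, pow_mul]; norm_num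
          _ ≤ 8 ^ b * (3 * b).factorial := nine_pow_even b
          _ = 2 ^ ((2 * 0 + 3) * b) * ((2 * 0 + 3) * b).factorial := by
              rw [h8]
      · -- i ≥ 5
        have hi5 : 5 ≤ 2 * c + 3 := by omega
        have h1 : (2 * c + 3) ^ (2 * b) ≤ 2 ^ ((2 * c + 3) * b) := by
          rw [pow_mul, pow_mul]
          exact Nat.pow_le_pow_left (sq_le_two_pow _ hi5) b
        have h2 : (2 * b).factorial ≤ ((2 * c + 3) * b).factorial :=
          Nat.factorial_le (by nlinarith)
        exact Nat.mul_le_mul h1 h2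
    · -- a odd, a = 2*b+1
      obtain ⟨b, rfl⟩ : ∃ b', a = 2 * b' + 1 := ⟨b, by omega⟩
      have he : (2 * c + 3) * (2 * b + 1) = 2 * ((2 * c + 3) * b + c) + 3 := by ring
      have hne : (2 * c + 3) * b + c ≠ 3 := by
        intro h; apply h9; rw [he]; omega
      rw [he, Fc_odd _ hne]
      rcases Nat.eq_zero_or_pos c with rfl | hc
      · -- i = 3
        simp only [Nat.mul_zero, Nat.zero_add, Nat.add_zero]
        have hb1 : b ≠ 1 := by
          intro h; apply h9; subst h; norm_num
        rcases Nat.eq_zero_or_pos b with rfl | hbpos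
        · norm_num [Nat.factorial]
        have hb2 : 2 ≤ b := by omega
        have h8 : (8 : ℕ) ^ b = 2 ^ (3 * b) := by
          rw [show (8:ℕ) = 2 ^ 3 from rfl, ← pow_mul]
        calc (2 * 0 + 3) ^ (2 * b + 1) * (2 * b + 1).factorial
            = 3 * (9 ^ b * (2 * b + 1).factorial) := by
              rw [show (2*0+3 : ℕ) = 3 from rfl, pow_succ', pow_mul]; norm_num; ring
          _ ≤ 3 * (8 ^ b * (3 * b).factorial) := Nat.mul_le_mul_left _ (nine_pow_odd b hb2)
          _ = 3 * 2 ^ ((2 * 0 + 3) * b + 0) * ((2 * 0 + 3) * b + 0).factorial := by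
              rw [h8]; norm_num; ring
      · -- i ≥ 5
        have hi5 : 5 ≤ 2 * c + 3 := by omega
        have h1 : (2 * c + 3) ^ (2 * b) ≤ 2 ^ ((2 * c + 3) * b) := by
          rw [pow_mul, pow_mul]
          exact Nat.pow_le_pow_left (sq_le_two_pow _ hi5) b
        have h2 : (2 * b + 1).factorial ≤ ((2 * c + 3) * b + c).factorial :=
          Nat.factorial_le (by nlinarith)
        calc (2 * c + 3) ^ (2 * b + 1) * (2 * b + 1).factorial
            = (2 * c + 3) * ((2 * c + 3) ^ (2 * b) * (2 * b + 1).factorial) := by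
              rw [pow_succ']; ring
          _ ≤ (3 * 2 ^ c) * (2 ^ ((2 * c + 3) * b) * ((2 * c + 3) * b + c).factorial) :=
              Nat.mul_le_mul (two_c_le c) (Nat.mul_le_mul h1 h2)
          _ = 3 * 2 ^ ((2 * c + 3) * b + c) * ((2 * c + 3) * b + c).factorial := by
              rw [pow_add]; ring

lemma Ffor_supermul (a b : ℕ) (ha : a = 0 ∨ 2 ≤ a) (hb : b = 0 ∨ 2 ≤ b) :
    Ffor a * Ffor b ≤ Ffor (a + b) := by
  rcases ha with rfl | ha
  · simp [Ffor]
  rcases hb with rfl | hb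
  · simp [Ffor]
  rcases Nat.even_or_odd a with ⟨x, hx⟩ | ⟨x, hx⟩
  · obtain ⟨x, rfl⟩ : ∃ x', a = 2 * x' := ⟨x, by omega⟩
    rcases Nat.even_or_odd b with ⟨y, hy⟩ | ⟨y, hy⟩
    · obtain ⟨y, rfl⟩ : ∃ y', b = 2 * y' := ⟨y, by omega⟩
      rw [show 2 * x + 2 * y = 2 * (x + y) by ring, Ffor_even, Ffor_even, Ffor_even]
      calc 2 ^ x * x.factorial * (2 ^ y * y.factorial)
          = 2 ^ (x + y) * (x.factorial * y.factorial) := by rw [pow_add]; ring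
        _ ≤ 2 ^ (x + y) * (x + y).factorial :=
            Nat.mul_le_mul_left _ (fact_mul_fact_le x y)
    · obtain ⟨y, rfl⟩ : ∃ y', b = 2 * y' + 3 := ⟨y - 1, by omega⟩
      rw [show 2 * x + (2 * y + 3) = 2 * (x + y) + 3 by ring, Ffor_even, Ffor_odd, Ffor_odd]
      calc 2 ^ x * x.factorial * (3 * 2 ^ y * y.factorial)
          = 3 * 2 ^ (x + y) * (x.factorial * y.factorial) := by rw [pow_add]; ring
        _ ≤ 3 * 2 ^ (x + y) * (x + y).factorial :=
            Nat.mul_le_mul_left _ (fact_mul_fact_le x y)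
  · obtain ⟨x, rfl⟩ : ∃ x', a = 2 * x' + 3 := ⟨x - 1, by omega⟩
    rcases Nat.even_or_odd b with ⟨y, hy⟩ | ⟨y, hy⟩
    · obtain ⟨y, rfl⟩ : ∃ y', b = 2 * y' := ⟨y, by omega⟩
      rw [show 2 * x + 3 + 2 * y = 2 * (x + y) + 3 by ring, Ffor_odd, Ffor_even, Ffor_odd]
      calc 3 * 2 ^ x * x.factorial * (2 ^ y * y.factorial)
          = 3 * 2 ^ (x + y) * (x.factorial * y.factorial) := by rw [pow_add]; ring
        _ ≤ 3 * 2 ^ (x + y) * (x + y).factorial :=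
            Nat.mul_le_mul_left _ (fact_mul_fact_le x y)
    · obtain ⟨y, rfl⟩ : ∃ y', b = 2 * y' + 3 := ⟨y - 1, by omega⟩
      rw [show 2 * x + 3 + (2 * y + 3) = 2 * (x + y + 3) by ring, Ffor_odd, Ffor_odd, Ffor_even]
      have key : 9 * (x.factorial * y.factorial) ≤ 8 * (x + y + 3).factorial := by
        calc 9 * (x.factorial * y.factorial) ≤ 9 * (x + y).factorial :=
              Nat.mul_le_mul_left _ (fact_mul_fact_le x y)
          _ ≤ 8 * (6 * (x + y).factorial) := by omega
          _ ≤ 8 * (x + y + 3).factorial := Nat.mul_le_mul_left _ (six_fact (x + y))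
      calc 3 * 2 ^ x * x.factorial * (3 * 2 ^ y * y.factorial)
          = 2 ^ (x + y) * (9 * (x.factorial * y.factorial)) := by rw [pow_add]; ring
        _ ≤ 2 ^ (x + y) * (8 * (x + y + 3).factorial) := Nat.mul_le_mul_left _ key
        _ = 2 ^ (x + y + 3) * (x + y + 3).factorial := by rw [pow_add]; ring

lemma Fc_nine_mul (b : ℕ) (hb : b = 0 ∨ 2 ≤ b) : Fc 9 * Fc b ≤ Fc (9 + b) := by
  rcases hb with rfl | hb
  · simp [Fc_nine, Fc_zero]
  rw [Fc_nine]
  by_cases hb9 : b = 9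
  · subst hb9
    rw [show (9 + 9 : ℕ) = 2 * 9 by norm_num, Fc_nine, Fc_even]
    norm_num [Nat.factorial]
  rcases Nat.even_or_odd b with ⟨y, hy⟩ | ⟨y, hy⟩
  · obtain ⟨m, rfl⟩ : ∃ m, b = 2 * m := ⟨y, by omega⟩
    have hm : 1 ≤ m := by omega
    rw [show (9 : ℕ) + 2 * m = 2 * (m + 3) + 3 by ring, Fc_even, Fc_odd _ (by omega)]
    have h24 : 24 * m.factorial ≤ (m + 3).factorial := by
      rw [fact3]
      have h : 24 ≤ (m + 1) * (m + 2) * (m + 3) :=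
        calc (24:ℕ) = 2 * 3 * 4 := rfl
          _ ≤ (m + 1) * (m + 2) * (m + 3) :=
            Nat.mul_le_mul (Nat.mul_le_mul (by omega) (by omega)) (by omega)
      exact Nat.mul_le_mul_right _ h
    calc 162 * (2 ^ m * m.factorial) = 2 ^ m * (162 * m.factorial) := by ring
      _ ≤ 2 ^ m * (24 * (m + 3).factorial) := by
          refine Nat.mul_le_mul_left _ ?_
          omega
      _ = 3 * (2 ^ m * 2 ^ 3) * (m + 3).factorial := by norm_num; ring
      _ = 3 * 2 ^ (m + 3) * (m + 3).factorial := by rw [pow_add]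
  · obtain ⟨y, rfl⟩ : ∃ y', b = 2 * y' + 3 := ⟨y - 1, by omega⟩
    have hy3 : y ≠ 3 := by omega
    rw [show (9 : ℕ) + (2 * y + 3) = 2 * (y + 6) by ring, Fc_odd _ hy3, Fc_even]
    have h36 : 36 * y.factorial ≤ (y + 6).factorial := by
      have h1 : 6 * y.factorial ≤ (y + 3).factorial := six_fact y
      have h2 : 6 * (y + 3).factorial ≤ (y + 6).factorial := six_fact (y + 3)
      omega
    calc 162 * (3 * 2 ^ y * y.factorial) = 2 ^ y * (486 * y.factorial) := by ring
      _ ≤ 2 ^ y * (64 * (y + 6).factorial) := Nat.mul_le_mul_left _ (by omega)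
      _ = 2 ^ y * 2 ^ 6 * (y + 6).factorial := by norm_num; ring
      _ = 2 ^ (y + 6) * (y + 6).factorial := by rw [pow_add]

lemma Fc_supermul (a b : ℕ) (ha : a = 0 ∨ 2 ≤ a) (hb : b = 0 ∨ 2 ≤ b) :
    Fc a * Fc b ≤ Fc (a + b) := by
  rcases eq_or_ne a 9 with rfl | ha9
  · exact Fc_nine_mul b hb
  rcases eq_or_ne b 9 with rfl | hb9
  · rw [mul_comm, add_comm]; exact Fc_nine_mul a ha
  rw [Fc, if_neg ha9, Fc, if_neg hb9]
  exact le_trans (Ffor_supermul a b ha hb) (Ffor_le_Fc (a + b))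

lemma prod_le_Fc (s : Finset ℕ) (B G : ℕ → ℕ)
    (hB : ∀ i ∈ s, B i = 0 ∨ 2 ≤ B i) (hG : ∀ i ∈ s, G i ≤ Fc (B i)) :
    (∏ i ∈ s, G i) ≤ Fc (∑ i ∈ s, B i) ∧
      ((∑ i ∈ s, B i) = 0 ∨ 2 ≤ ∑ i ∈ s, B i) := by
  induction s using Finset.cons_induction_on with
  | empty => simp [Fc_zero]
  | cons a s hnotmem ih =>
      obtain ⟨ih1, ih2⟩ := ih (fun i hi => hB i (Finset.mem_cons_of_mem hi))
        (fun i hi => hG i (Finset.mem_cons_of_mem hi))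
      have hBa := hB a (Finset.mem_cons_self a s)
      have hGa := hG a (Finset.mem_cons_self a s)
      rw [Finset.prod_cons, Finset.sum_cons]
      constructor
      · calc G a * ∏ i ∈ s, G i ≤ Fc (B a) * Fc (∑ i ∈ s, B i) :=
              Nat.mul_le_mul hGa ih1
          _ ≤ Fc (B a + ∑ i ∈ s, B i) := Fc_supermul _ _ hBa ih2
      · omega

lemma sum_count_mul (N : ℕ) (s : Multiset ℕ) (h : ∀ x ∈ s, x < N) :
    ∑ i ∈ Finset.range N, i * s.count i = s.sum := by
  induction s using Multiset.induction with
  | empty => simp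
  | cons a s ih =>
      have haN : a ∈ Finset.range N := Finset.mem_range.mpr (h a (Multiset.mem_cons_self a s))
      have ih' := ih (fun x hx => h x (Multiset.mem_cons_of_mem hx))
      simp only [Multiset.count_cons, Multiset.sum_cons]
      have hsplit : ∀ x : ℕ, x * (s.count x + if x = a then 1 else 0)
          = x * s.count x + if x = a then x else 0 := by
        intro x; split <;> ring
      rw [Finset.sum_congr rfl fun x _ => hsplit x, Finset.sum_add_distrib,
        Finset.sum_ite_eq' (Finset.range N) a (fun x => x), if_pos haN, ih']
      ring

/-- For every odd `k ≥ 11` and every partition `q` of `k` with no part equal to 1,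
`Sym(q) ≤ 3 · 2^((k−3)/2) · ((k−3)/2)!`, i.e. the partition `[3, 2^((k−3)/2)]`
maximizes the symmetry factor among partitions of `k` with all parts at least 2. -/
theorem symFactor_le_of_odd (k : ℕ) (hk : Odd k) (hk11 : 11 ≤ k)
    (q : Nat.Partition k) (hq : 1 ∉ q.parts) :
    symFactor q ≤ 3 * 2 ^ ((k - 3) / 2) * ((k - 3) / 2).factorial := by
  unfold symFactor
  have hparts_le : ∀ x ∈ q.parts, x < k + 1 := by
    intro x hx
    have := Multiset.single_le_sum (fun y _ => Nat.zero_le y) x hx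
    rw [q.parts_sum] at this
    omega
  have hsum : ∑ i ∈ Finset.range (k + 1), i * q.parts.count i = k := by
    rw [sum_count_mul (k + 1) q.parts hparts_le, q.parts_sum]
  have hB : ∀ i ∈ Finset.range (k + 1), i * q.parts.count i = 0 ∨ 2 ≤ i * q.parts.count i := by
    intro i _
    rcases Nat.eq_zero_or_pos (q.parts.count i) with hc | hc
    · left; rw [hc]; ring
    · rcases Nat.lt_or_ge i 2 with hi | hi
      · interval_cases i
        · left
          have : (0 : ℕ) ∉ q.parts := fun h0 => by
            exact absurd (q.parts_pos h0) (by norm_num)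
          simp [Multiset.count_eq_zero_of_notMem this]
        · left
          simp [Multiset.count_eq_zero_of_notMem hq]
      · right
        calc 2 = 2 * 1 := rfl
          _ ≤ i * q.parts.count i := Nat.mul_le_mul hi hc
  have hG : ∀ i ∈ Finset.range (k + 1),
      i ^ q.parts.count i * (q.parts.count i).factorial ≤ Fc (i * q.parts.count i) := by
    intro i _
    rcases Nat.lt_or_ge i 2 with hi | hi
    · interval_cases i
      · have h0 : (0 : ℕ) ∉ q.parts := fun h0 => by
          exact absurd (q.parts_pos h0) (by norm_num)
        simp [Multiset.count_eq_zero_of_notMem h0, Fc_zero, Nat.factorial]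
      · simp [Multiset.count_eq_zero_of_notMem hq, Fc_zero, Nat.factorial]
    · exact blockbound i _ hi
  obtain ⟨h1, _⟩ := prod_le_Fc (Finset.range (k + 1)) _ _ hB hG
  rw [hsum] at h1
  obtain ⟨m, rfl⟩ : ∃ m, k = 2 * m + 3 := by
    obtain ⟨t, ht⟩ := hk
    exact ⟨t - 1, by omega⟩
  have hm : m ≠ 3 := by omega
  rw [Fc_odd m hm] at h1
  have hdiv : (2 * m + 3 - 3) / 2 = m := by omega
  rw [hdiv]
  exact h1
end

section
/- For every fixed integer K ≥ 2 there exists N such that for all n ≥ N and all integers k with K ≤ k ≤ n, one has f(n,k) ≤ f(n,K); that is, for n sufficiently large relative to K, the function k ↦ f(n,k) on {K, K+1, …, n} attains its maximum at k = K. -/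
open Finset Filter

/-- `P_1(k)`: the number of partitions of `k` with no part equal to 1. -/
def P1 (k : ℕ) : ℕ :=
  (Finset.univ.filter (fun q : Nat.Partition k => 1 ∉ q.parts)).card

/-- `f(n,k) = ((n−k)!/n!) · P_1(k) · 2^(k/2) · (k/2)!` for even `k`, and
`f(n,k) = ((n−k)!/n!) · P_1(k) · 2^((k−3)/2) · ((k−3)/2)!` for odd `k`. -/
noncomputable def f (n k : ℕ) : ℝ :=
  if Even k then
    ((n - k).factorial : ℝ) / (n.factorial : ℝ) * (P1 k : ℝ) * 2 ^ (k / 2) *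
      ((k / 2).factorial : ℝ)
  else
    ((n - k).factorial : ℝ) / (n.factorial : ℝ) * (P1 k : ℝ) * 2 ^ ((k - 3) / 2) *
      (((k - 3) / 2).factorial : ℝ)

/-- Auxiliary integer weight: `f n k = (n-k)!/n! * G k`. -/
def G (k : ℕ) : ℕ :=
  if Even k then P1 k * 2 ^ (k / 2) * (k / 2).factorial
  else P1 k * 2 ^ ((k - 3) / 2) * ((k - 3) / 2).factorial

lemma f_eq (n k : ℕ) : f n k = ((n - k).factorial : ℝ) / (n.factorial : ℝ) * (G k : ℝ) := by
  unfold f G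
  split <;> push_cast <;> ring

lemma P1_le (k : ℕ) : P1 k ≤ 2 ^ k := by
  classical
  have h1 : P1 k ≤ Fintype.card (Nat.Partition k) :=
    le_trans (Finset.card_filter_le _ _) (le_of_eq Finset.card_univ)
  have h2 : Fintype.card (Nat.Partition k) ≤ Fintype.card (Composition k) := by
    apply Fintype.card_le_of_injective (fun p =>
      ⟨Multiset.sort p.parts (· ≤ ·),
        fun hi => p.parts_pos ((Multiset.mem_sort _).1 hi),
        by
          have h : ((Multiset.sort p.parts (· ≤ ·) : Multiset ℕ)).sum = k := by
            rw [Multiset.sort_eq]; exact p.parts_sum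
          rwa [Multiset.sum_coe] at h⟩)
    intro p q h
    have hb : Multiset.sort p.parts (· ≤ ·) = Multiset.sort q.parts (· ≤ ·) :=
      congrArg Composition.blocks h
    have h2 : (↑(Multiset.sort p.parts (· ≤ ·)) : Multiset ℕ)
        = ↑(Multiset.sort q.parts (· ≤ ·)) := by rw [hb]
    rw [Multiset.sort_eq, Multiset.sort_eq] at h2
    exact Nat.Partition.ext h2
  calc P1 k ≤ Fintype.card (Composition k) := le_trans h1 h2
    _ = 2 ^ (k - 1) := composition_card k
    _ ≤ 2 ^ k := Nat.pow_le_pow_right (by norm_num) (Nat.sub_le _ _)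

lemma G_le (k : ℕ) : G k ≤ 4 ^ k * (k / 2).factorial := by
  have h4 : (4 : ℕ) ^ k = 2 ^ k * 2 ^ k := by
    rw [show (4 : ℕ) = 2 * 2 by norm_num, mul_pow]
  unfold G
  split
  · calc P1 k * 2 ^ (k / 2) * (k / 2).factorial
        ≤ 2 ^ k * 2 ^ k * (k / 2).factorial :=
          Nat.mul_le_mul (Nat.mul_le_mul (P1_le k)
            (Nat.pow_le_pow_right (by norm_num) (Nat.div_le_self k 2))) (le_refl _)
      _ = 4 ^ k * (k / 2).factorial := by rw [h4]
  · calc P1 k * 2 ^ ((k - 3) / 2) * ((k - 3) / 2).factorial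
        ≤ 2 ^ k * 2 ^ k * (k / 2).factorial :=
          Nat.mul_le_mul (Nat.mul_le_mul (P1_le k)
            (Nat.pow_le_pow_right (by norm_num) (by omega)))
            (Nat.factorial_le (by omega))
      _ = 4 ^ k * (k / 2).factorial := by rw [h4]

lemma P1_pos {k : ℕ} (hk : 2 ≤ k) : 0 < P1 k := by
  classical
  apply Finset.card_pos.2
  refine ⟨Nat.Partition.indiscrete k, ?_⟩
  simp only [Finset.mem_filter, Finset.mem_univ, true_and]
  rw [Nat.Partition.indiscrete_parts (by omega)]
  simp
  omega

lemma one_le_G {k : ℕ} (hk : 2 ≤ k) : 1 ≤ G k := by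
  have h := P1_pos hk
  unfold G
  split <;>
    exact Nat.one_le_iff_ne_zero.2 (by positivity)

lemma fact_mul_fact_le_s5 (a b : ℕ) : a.factorial * b.factorial ≤ (a + b).factorial := by
  have h := Nat.choose_mul_factorial_mul_factorial (Nat.le_add_right a b)
  rw [Nat.add_sub_cancel_left] at h
  have hpos : 0 < (a + b).choose a := Nat.choose_pos (Nat.le_add_right a b)
  calc a.factorial * b.factorial
      ≤ (a + b).choose a * (a.factorial * b.factorial) := Nat.le_mul_of_pos_left _ hpos
    _ = (a + b).factorial := by rw [← h]; ring

lemma pow_mul_fact_le_s5 (m d : ℕ) : (m + 1) ^ d * m.factorial ≤ (m + d).factorial := by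
  induction d with
  | zero => simp
  | succ d ih =>
    have h1 : (m + 1) ^ (d + 1) * m.factorial
        = (m + 1) * ((m + 1) ^ d * m.factorial) := by ring
    rw [h1]
    calc (m + 1) * ((m + 1) ^ d * m.factorial)
        ≤ (m + 1) * (m + d).factorial := Nat.mul_le_mul_left _ ih
      _ ≤ (m + d + 1) * (m + d).factorial := Nat.mul_le_mul_right _ (by omega)
      _ = (m + (d + 1)).factorial := by rw [show m + (d + 1) = (m + d) + 1 by ring,
            Nat.factorial_succ]

lemma key_nat (K : ℕ) (hK : 2 ≤ K) (n : ℕ)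
    (hn : 65536 + 4 ^ (4 * K) * (2 * K).factorial + 4 * K ≤ n)
    (k : ℕ) (hKk : K < k) (hkn : k ≤ n) :
    4 ^ k * ((k / 2).factorial * (n - k).factorial) ≤ (n - K).factorial := by
  set C := 4 ^ (4 * K) * (2 * K).factorial with hC
  by_cases hc : k < 4 * K
  · -- small k
    have hsmall : 4 ^ k * ((k / 2).factorial * (n - k).factorial)
        ≤ C * (n - k).factorial := by
      rw [hC, ← mul_assoc]
      exact Nat.mul_le_mul (Nat.mul_le_mul
        (Nat.pow_le_pow_right (by norm_num) (by omega))
        (Nat.factorial_le (by omega))) (le_refl _)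
    have hstep : C * (n - k).factorial ≤ (n - k + 1).factorial := by
      rw [Nat.factorial_succ]
      exact Nat.mul_le_mul_right _ (by omega)
    have hmono : (n - k + 1).factorial ≤ (n - K).factorial :=
      Nat.factorial_le (by omega)
    exact hsmall.trans (hstep.trans hmono)
  · -- large k : k ≥ 4K
    push_neg at hc
    set m := k / 2 + (n - k) with hm
    set d := (n - K) - m with hd
    have hmd : m + d = n - K := by omega
    have hd7 : k ≤ 7 * d := by omega
    have hm1 : 16384 ≤ m + 1 := by omega
    have h1 : (k / 2).factorial * (n - k).factorial ≤ m.factorial :=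
      fact_mul_fact_le_s5 _ _
    have h2 : 4 ^ k ≤ (m + 1) ^ d := by
      calc (4 : ℕ) ^ k ≤ 4 ^ (7 * d) := Nat.pow_le_pow_right (by norm_num) hd7
        _ = 16384 ^ d := by rw [pow_mul]; norm_num
        _ ≤ (m + 1) ^ d := Nat.pow_le_pow_left hm1 d
    calc 4 ^ k * ((k / 2).factorial * (n - k).factorial)
        ≤ (m + 1) ^ d * m.factorial := Nat.mul_le_mul h2 h1
      _ ≤ (m + d).factorial := pow_mul_fact_le_s5 m d
      _ = (n - K).factorial := by rw [hmd]

/-- For every fixed `K ≥ 2` there exists `N` such that for all `n ≥ N` and all `k`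
with `K ≤ k ≤ n`, `f(n,k) ≤ f(n,K)`: for `n` large, `k ↦ f(n,k)` on `{K,…,n}`
attains its maximum at `k = K`. -/
theorem f_max_at_K (K : ℕ) (hK : 2 ≤ K) :
    ∃ N : ℕ, ∀ n : ℕ, N ≤ n → ∀ k : ℕ, K ≤ k → k ≤ n → f n k ≤ f n K := by
  refine ⟨65536 + 4 ^ (4 * K) * (2 * K).factorial + 4 * K, fun n hn k hKk hkn => ?_⟩
  rcases eq_or_lt_of_le hKk with rfl | hlt
  · exact le_refl _
  have hnat : (n - k).factorial * G k ≤ (n - K).factorial * G K := by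
    calc (n - k).factorial * G k
        ≤ (n - k).factorial * (4 ^ k * (k / 2).factorial) :=
          Nat.mul_le_mul_left _ (G_le k)
      _ = 4 ^ k * ((k / 2).factorial * (n - k).factorial) := by ring
      _ ≤ (n - K).factorial := key_nat K hK n hn k hlt hkn
      _ ≤ (n - K).factorial * G K := Nat.le_mul_of_pos_right _ (one_le_G hK)
  rw [f_eq, f_eq, div_mul_eq_mul_div, div_mul_eq_mul_div]
  have hc : (0:ℝ) < (n.factorial : ℝ) := by positivity
  rw [div_le_div_iff_of_pos_right hc]
  exact_mod_cast hnat
end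

section
/- For every fixed integer K ≥ 2 there exists N such that for all n ≥ N with n ≡ K (mod 2), one has f(n, n) ≤ f(n, K). -/
open Finset Filter

lemma P1_le_two_pow (n : ℕ) : P1 n ≤ 2 ^ n := by
  calc P1 n ≤ Fintype.card (Nat.Partition n) := Finset.card_filter_le _ _
    _ ≤ Fintype.card (Composition n) :=
        Fintype.card_le_of_surjective _ Nat.Partition.ofComposition_surj
    _ = 2 ^ (n - 1) := composition_card n
    _ ≤ 2 ^ n := Nat.pow_le_pow_right (by norm_num) (Nat.sub_le _ _)

lemma fact_aux (a b : ℕ) (h : a ≤ b) :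
    a.factorial * (a + 1) ^ (b - a) ≤ b.factorial := by
  induction b, h using Nat.le_induction with
  | base => simp
  | succ b hb ih =>
    have h1 : b + 1 - a = (b - a) + 1 := by omega
    rw [h1, pow_succ, ← mul_assoc, Nat.factorial_succ]
    calc a.factorial * (a + 1) ^ (b - a) * (a + 1)
        ≤ b.factorial * (a + 1) := Nat.mul_le_mul_right _ ih
      _ ≤ b.factorial * (b + 1) := Nat.mul_le_mul_left _ (by omega)
      _ = (b + 1) * b.factorial := Nat.mul_comm _ _

lemma key (K n : ℕ) (hn : 8 * K + 512 ≤ n) :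
    P1 n * 2 ^ (n / 2) * (n / 2).factorial ≤ (n - K).factorial := by
  set m := n / 2 with hm
  have h2 : m ≤ n - K := by omega
  have h3 : n + m ≤ 8 * (n - K - m) := by omega
  have h4 : 2 ^ (n + m) ≤ (m + 1) ^ (n - K - m) := by
    calc 2 ^ (n + m) ≤ 2 ^ (8 * (n - K - m)) := Nat.pow_le_pow_right (by norm_num) h3
      _ = (2 ^ 8) ^ (n - K - m) := by rw [pow_mul]
      _ ≤ (m + 1) ^ (n - K - m) := Nat.pow_le_pow_left (by omega) _
  calc P1 n * 2 ^ m * m.factorial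
      ≤ 2 ^ n * 2 ^ m * m.factorial := by
        exact Nat.mul_le_mul_right _ (Nat.mul_le_mul_right _ (P1_le_two_pow n))
    _ = 2 ^ (n + m) * m.factorial := by rw [pow_add]
    _ ≤ (m + 1) ^ (n - K - m) * m.factorial := Nat.mul_le_mul_right _ h4
    _ = m.factorial * (m + 1) ^ (n - K - m) := Nat.mul_comm _ _
    _ ≤ (n - K).factorial := fact_aux m (n - K) h2

lemma one_le_P1 (K : ℕ) (hK : 2 ≤ K) : 1 ≤ P1 K := by
  rw [P1]
  apply Nat.succ_le_of_lt
  apply Finset.card_pos.2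
  rcases Nat.even_or_odd K with he | ho
  · obtain ⟨j, hj⟩ := he
    refine ⟨⟨Multiset.replicate (K / 2) 2, ?_, ?_⟩, ?_⟩
    · intro i hi; rw [Multiset.eq_of_mem_replicate hi]; norm_num
    · rw [Multiset.sum_replicate, smul_eq_mul]; omega
    · simp only [Finset.mem_filter, Finset.mem_univ, true_and]
      intro h1
      have := Multiset.eq_of_mem_replicate h1; omega
  · obtain ⟨j, hj⟩ := ho
    have h3 : 3 ≤ K := by omega
    refine ⟨⟨3 ::ₘ Multiset.replicate ((K - 3) / 2) 2, ?_, ?_⟩, ?_⟩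
    · intro i hi
      rcases Multiset.mem_cons.1 hi with h | h
      · omega
      · rw [Multiset.eq_of_mem_replicate h]; norm_num
    · rw [Multiset.sum_cons, Multiset.sum_replicate, smul_eq_mul]
      omega
    · simp only [Finset.mem_filter, Finset.mem_univ, true_and]
      intro h1
      rcases Multiset.mem_cons.1 h1 with h | h
      · omega
      · have := Multiset.eq_of_mem_replicate h; omega


/-- For every fixed `K ≥ 2` there exists `N` such that for all `n ≥ N` with
`n ≡ K (mod 2)`, `f(n, n) ≤ f(n, K)`. -/
theorem f_n_le_f_K (K : ℕ) (hK : 2 ≤ K) :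
    ∃ N : ℕ, ∀ n : ℕ, N ≤ n → n % 2 = K % 2 → f n n ≤ f n K := by
  refine ⟨8 * K + 512, fun n hn hpar => ?_⟩
  have hn0 : (0 : ℝ) < n.factorial := by positivity
  have hkey := key K n hn
  unfold f
  by_cases hEK : Even K
  · have hEn : Even n := by rw [Nat.even_iff] at *; omega
    rw [if_pos hEK, if_pos hEn, Nat.sub_self, Nat.factorial_zero]
    have hB : 1 ≤ P1 K * 2 ^ (K / 2) * (K / 2).factorial :=
      Nat.one_le_iff_ne_zero.2 (by
        have := one_le_P1 K hK
        positivity)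
    have key3 : P1 n * 2 ^ (n / 2) * (n / 2).factorial ≤
        (n - K).factorial * P1 K * 2 ^ (K / 2) * (K / 2).factorial := by
      calc P1 n * 2 ^ (n / 2) * (n / 2).factorial ≤ (n - K).factorial := hkey
        _ = (n - K).factorial * 1 := (Nat.mul_one _).symm
        _ ≤ (n - K).factorial * (P1 K * 2 ^ (K / 2) * (K / 2).factorial) :=
            Nat.mul_le_mul_left _ hB
        _ = (n - K).factorial * P1 K * 2 ^ (K / 2) * (K / 2).factorial := by ring
    rw [div_mul_eq_mul_div, div_mul_eq_mul_div, div_mul_eq_mul_div,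
        div_mul_eq_mul_div, div_mul_eq_mul_div, div_mul_eq_mul_div,
        div_le_div_iff_of_pos_right hn0, Nat.cast_one, one_mul]
    exact_mod_cast key3
  · have hEn : ¬ Even n := by rw [Nat.even_iff] at *; omega
    rw [if_neg hEK, if_neg hEn, Nat.sub_self, Nat.factorial_zero]
    have hB : 1 ≤ P1 K * 2 ^ ((K - 3) / 2) * ((K - 3) / 2).factorial :=
      Nat.one_le_iff_ne_zero.2 (by
        have := one_le_P1 K hK
        positivity)
    have key3 : P1 n * 2 ^ ((n - 3) / 2) * ((n - 3) / 2).factorial ≤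
        (n - K).factorial * P1 K * 2 ^ ((K - 3) / 2) * ((K - 3) / 2).factorial := by
      calc P1 n * 2 ^ ((n - 3) / 2) * ((n - 3) / 2).factorial
          ≤ P1 n * 2 ^ (n / 2) * (n / 2).factorial :=
            Nat.mul_le_mul (Nat.mul_le_mul_left _
              (Nat.pow_le_pow_right (by norm_num) (by omega)))
              (Nat.factorial_le (by omega))
        _ ≤ (n - K).factorial := hkey
        _ = (n - K).factorial * 1 := (Nat.mul_one _).symm
        _ ≤ (n - K).factorial * (P1 K * 2 ^ ((K - 3) / 2) * ((K - 3) / 2).factorial) :=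
            Nat.mul_le_mul_left _ hB
        _ = _ := by ring
    rw [div_mul_eq_mul_div, div_mul_eq_mul_div, div_mul_eq_mul_div,
        div_mul_eq_mul_div, div_mul_eq_mul_div, div_mul_eq_mul_div,
        div_le_div_iff_of_pos_right hn0, Nat.cast_one, one_mul]
    exact_mod_cast key3
end

section
/- For every even positive integer n, the sum of Sym(q) over all partitions q of n with no part equal to 1 is at most P_1(n) · 2^{n/2} · (n/2)!; and for every odd integer n ≥ 11, this sum is at most P_1(n) · 3 · 2^{(n−3)/2} · ((n−3)/2)!. -/
open Finset

namespace SymAux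

def myE (h : ℕ) : ℕ := 2 ^ h * h.factorial

lemma myE_pos (h : ℕ) : 0 < myE h := by
  unfold myE; positivity

lemma myE_succ (h : ℕ) : myE (h + 1) = 2 * (h + 1) * myE h := by
  unfold myE; rw [pow_succ, Nat.factorial_succ]; ring

lemma myE_add3 (h : ℕ) : myE (h + 3) = 8 * (h + 1) * (h + 2) * (h + 3) * myE h := by
  rw [show h + 3 = (h + 2) + 1 from rfl, myE_succ, show h + 2 = (h + 1) + 1 from rfl,
    myE_succ, myE_succ]; ring

lemma myE_mul_le (a b : ℕ) : myE a * myE b ≤ myE (a + b) := by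
  unfold myE
  have h1 : a.factorial * b.factorial ≤ (a + b).factorial :=
    Nat.le_of_dvd (Nat.factorial_pos _) (Nat.factorial_mul_factorial_dvd_factorial_add a b)
  calc 2 ^ a * a.factorial * (2 ^ b * b.factorial)
      = 2 ^ (a + b) * (a.factorial * b.factorial) := by rw [pow_add]; ring
    _ ≤ 2 ^ (a + b) * (a + b).factorial := Nat.mul_le_mul_left _ h1

lemma E_grow1 : ∀ t, 1 ≤ t → ∀ h, 2 ^ t * (h + 1) * myE h ≤ myE (h + t) := by
  intro t ht
  induction t, ht using Nat.le_induction with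
  | base => intro h; rw [myE_succ]; ring_nf; exact le_refl _
  | succ t ht ih =>
      intro h
      have h1 : 2 ^ (t + 1) * (h + 1) * myE h = 2 * (2 ^ t * (h + 1) * myE h) := by ring
      rw [h1, show h + (t + 1) = (h + t) + 1 from rfl, myE_succ]
      calc 2 * (2 ^ t * (h + 1) * myE h) ≤ 2 * myE (h + t) :=
            Nat.mul_le_mul_left _ (ih h)
        _ ≤ 2 * (h + t + 1) * myE (h + t) := by
            have : (2 : ℕ) ≤ 2 * (h + t + 1) := by nlinarith
            exact Nat.mul_le_mul_right _ this

lemma E_grow3 : ∀ t, 3 ≤ t → ∀ h, 2 ^ t * ((h + 1) * (h + 2) * (h + 3)) * myE h ≤ myE (h + t) := by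
  intro t ht
  induction t, ht using Nat.le_induction with
  | base => intro h; rw [myE_add3]; ring_nf; exact le_refl _
  | succ t ht ih =>
      intro h
      have h1 : 2 ^ (t + 1) * ((h + 1) * (h + 2) * (h + 3)) * myE h
          = 2 * (2 ^ t * ((h + 1) * (h + 2) * (h + 3)) * myE h) := by ring
      rw [h1, show h + (t + 1) = (h + t) + 1 from rfl, myE_succ]
      calc 2 * (2 ^ t * ((h + 1) * (h + 2) * (h + 3)) * myE h) ≤ 2 * myE (h + t) :=
            Nat.mul_le_mul_left _ (ih h)
        _ ≤ 2 * (h + t + 1) * myE (h + t) := by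
            have : (2 : ℕ) ≤ 2 * (h + t + 1) := by nlinarith
            exact Nat.mul_le_mul_right _ this

lemma two_mul_le_two_pow : ∀ j, 1 ≤ j → 2 * j ≤ 2 ^ j := by
  intro j hj
  induction j, hj using Nat.le_induction with
  | base => norm_num
  | succ j hj ih => rw [pow_succ]; omega

lemma sq_le_three_mul_two_pow : ∀ i : ℕ, i * i ≤ 3 * 2 ^ i := by
  intro i
  induction i with
  | zero => norm_num
  | succ i ih =>
      rcases Nat.lt_or_ge i 3 with h | h
      · interval_cases i <;> norm_num
      · have : (i + 1) * (i + 1) ≤ 2 * (i * i) := by nlinarith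
        rw [pow_succ]
        nlinarith

lemma fortyeight_le : ∀ c, 48 * myE c ≤ myE (c + 3) := by
  intro c
  rw [myE_add3]
  have : 48 ≤ 8 * (c + 1) * (c + 2) * (c + 3) := by
    calc (48:ℕ) = 8 * 1 * 2 * 3 := by norm_num
      _ ≤ 8 * (c + 1) * (c + 2) * (c + 3) := by gcongr <;> omega
  exact Nat.mul_le_mul_right _ this

lemma le54 : ∀ c, 1 ≤ c → 54 * myE c ≤ myE (c + 3) := by
  intro c hc
  rw [myE_add3]
  have : 54 ≤ 8 * (c + 1) * (c + 2) * (c + 3) := by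
    calc (54:ℕ) ≤ 8 * 2 * 3 * 4 := by norm_num
      _ ≤ 8 * (c + 1) * (c + 2) * (c + 3) := by gcongr <;> omega
  exact Nat.mul_le_mul_right _ this

lemma le486 : ∀ c, 486 * myE c ≤ myE (c + 6) := by
  intro c
  have h1 : 486 * myE c ≤ 48 * (48 * myE c) := by
    have := myE_pos c; nlinarith
  calc 486 * myE c ≤ 48 * (48 * myE c) := h1
    _ ≤ 48 * myE (c + 3) := Nat.mul_le_mul_left _ (fortyeight_le c)
    _ ≤ myE (c + 3 + 3) := fortyeight_le (c + 3)
    _ = myE (c + 6) := by ring_nf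


lemma BE1 : ∀ j, 1 ≤ j → ∀ p, (2 * j) ^ p * p.factorial ≤ myE (j * p) := by
  intro j hj p
  induction p with
  | zero => simp [myE]
  | succ p ih =>
      have h1 : (2 * j) ^ (p + 1) * (p + 1).factorial
          = (2 * j * (p + 1)) * ((2 * j) ^ p * p.factorial) := by
        rw [pow_succ, Nat.factorial_succ]; ring
      rw [h1, Nat.mul_succ]
      calc 2 * j * (p + 1) * ((2 * j) ^ p * p.factorial)
          ≤ 2 * j * (p + 1) * myE (j * p) := Nat.mul_le_mul_left _ ih
        _ ≤ 2 ^ j * (j * p + 1) * myE (j * p) := by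
            apply Nat.mul_le_mul_right
            calc 2 * j * (p + 1) ≤ 2 * j * (j * p + 1) := by
                  apply Nat.mul_le_mul_left
                  have : p ≤ j * p := Nat.le_mul_of_pos_left p hj
                  omega
              _ ≤ 2 ^ j * (j * p + 1) := Nat.mul_le_mul_right _ (two_mul_le_two_pow j hj)
        _ ≤ myE (j * p + j) := E_grow1 j hj (j * p)

lemma BE2 : ∀ i, 3 ≤ i → ∀ r, i ^ (2 * r) * (2 * r).factorial ≤ myE (i * r) := by
  intro i hi r
  induction r with
  | zero => simp [myE]
  | succ r ih =>
      have h1 : i ^ (2 * (r + 1)) * (2 * (r + 1)).factorial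
          = (i * i * ((2 * r + 1) * (2 * r + 2))) * (i ^ (2 * r) * (2 * r).factorial) := by
        rw [show 2 * (r + 1) = (2 * r + 1) + 1 from rfl, Nat.factorial_succ,
          show 2 * r + 1 = (2 * r) + 1 from rfl, Nat.factorial_succ, pow_add]
        ring
      rw [h1, Nat.mul_succ]
      have h3 : 3 ≤ i := hi
      calc i * i * ((2 * r + 1) * (2 * r + 2)) * (i ^ (2 * r) * (2 * r).factorial)
          ≤ i * i * ((2 * r + 1) * (2 * r + 2)) * myE (i * r) := Nat.mul_le_mul_left _ ih
        _ ≤ 2 ^ i * ((i * r + 1) * (i * r + 2) * (i * r + 3)) * myE (i * r) := by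
            apply Nat.mul_le_mul_right
            have hr : 2 * r ≤ i * r := Nat.mul_le_mul_right r (by omega)
            calc i * i * ((2 * r + 1) * (2 * r + 2))
                ≤ 3 * 2 ^ i * ((2 * r + 1) * (2 * r + 2)) :=
                  Nat.mul_le_mul_right _ (sq_le_three_mul_two_pow i)
              _ = 2 ^ i * ((2 * r + 1) * (2 * r + 2) * 3) := by ring
              _ ≤ 2 ^ i * ((i * r + 1) * (i * r + 2) * (i * r + 3)) := by
                  apply Nat.mul_le_mul_left
                  gcongr <;> omega
        _ ≤ myE (i * r + i) := E_grow3 i hi (i * r)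

lemma blockEven {i p a : ℕ} (hi : 2 ≤ i) (hip : i * p = 2 * a) :
    i ^ p * p.factorial ≤ myE a := by
  rcases Nat.even_or_odd i with ⟨j, hj⟩ | hodd
  · -- i = 2 j
    have hj' : i = 2 * j := by omega
    have hj1 : 1 ≤ j := by omega
    have ha : j * p = a := by
      have : 2 * (j * p) = 2 * a := by rw [← hip, hj']; ring
      omega
    rw [hj', ha.symm] at *
    exact BE1 j hj1 p
  · -- i odd, so p even
    have hpe : Even p := by
      rcases Nat.even_or_odd p with h | h
      · exact h
      · exfalso
        have : Odd (i * p) := hodd.mul h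
        rcases this with ⟨k, hk⟩; omega
    obtain ⟨r, hr⟩ := hpe
    have hp' : p = 2 * r := by omega
    have hi3 : 3 ≤ i := by
      rcases hodd with ⟨k, hk⟩; omega
    have ha : i * r = a := by
      have : 2 * (i * r) = 2 * a := by rw [← hip, hp']; ring
      omega
    rw [hp', ← ha]
    exact BE2 i hi3 r

lemma BO_base5 : ∀ a, 1 ≤ a → 2 * a + 3 ≤ 3 * myE a := by
  intro a ha
  induction a, ha using Nat.le_induction with
  | base => simp [myE, Nat.factorial]
  | succ a ha ih =>
      rw [myE_succ]
      have h1 : 3 * (2 * (a + 1) * myE a) ≥ 4 * (3 * myE a) := by nlinarith [myE_pos a]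
      omega

lemma BO1 : ∀ i, 5 ≤ i → ∀ r a, i * (2 * r + 1) = 2 * a + 3 →
    i ^ (2 * r + 1) * (2 * r + 1).factorial ≤ 3 * myE a := by
  intro i hi5 r
  induction r with
  | zero =>
      intro a ha
      have hia : i = 2 * a + 3 := by omega
      have ha1 : 1 ≤ a := by omega
      calc i ^ (2 * 0 + 1) * (2 * 0 + 1).factorial = i := by simp [Nat.factorial]
        _ = 2 * a + 3 := hia
        _ ≤ 3 * myE a := BO_base5 a ha1
  | succ r ih =>
      intro a' ha'
      have hkey : i * (2 * r + 1) + 2 * i = 2 * a' + 3 := by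
        rw [← ha']; ring
      have hge : i * 3 ≤ i * (2 * (r + 1) + 1) := Nat.mul_le_mul_left i (by omega)
      have hai : i ≤ a' := by
        have h5 : 5 * 3 ≤ i * 3 := Nat.mul_le_mul_right 3 hi5
        -- 2a'+3 = i(2r+3) ≥ 3i ≥ i + 10
        have : 3 * i ≤ 2 * a' + 3 := by rw [← ha']; linarith [hge]
        linarith
      obtain ⟨a, rfl⟩ : ∃ a, a' = a + i := ⟨a' - i, by omega⟩
      have ha : i * (2 * r + 1) = 2 * a + 3 := by linarith [hkey]
      have har : 5 * (2 * r + 1) ≤ i * (2 * r + 1) := Nat.mul_le_mul_right _ hi5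
      have hage : 2 * r + 2 ≤ a + 1 := by omega
      have h1 : i ^ (2 * (r + 1) + 1) * (2 * (r + 1) + 1).factorial
          = (i * i * ((2 * r + 2) * (2 * r + 3))) * (i ^ (2 * r + 1) * (2 * r + 1).factorial) := by
        rw [show 2 * (r + 1) + 1 = (2 * r + 2) + 1 from rfl, Nat.factorial_succ,
          show 2 * r + 2 = (2 * r + 1) + 1 from rfl, Nat.factorial_succ, pow_add]
        ring
      rw [h1]
      calc i * i * ((2 * r + 2) * (2 * r + 3)) * (i ^ (2 * r + 1) * (2 * r + 1).factorial)
          ≤ i * i * ((2 * r + 2) * (2 * r + 3)) * (3 * myE a) :=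
            Nat.mul_le_mul_left _ (ih a ha)
        _ = 3 * ((i * i * ((2 * r + 2) * (2 * r + 3))) * myE a) := by ring
        _ ≤ 3 * ((2 ^ i * ((a + 1) * (a + 2) * (a + 3))) * myE a) := by
            apply Nat.mul_le_mul_left
            apply Nat.mul_le_mul_right
            calc i * i * ((2 * r + 2) * (2 * r + 3))
                ≤ 3 * 2 ^ i * ((2 * r + 2) * (2 * r + 3)) :=
                  Nat.mul_le_mul_right _ (sq_le_three_mul_two_pow i)
              _ = 2 ^ i * ((2 * r + 2) * (2 * r + 3) * 3) := by ring
              _ ≤ 2 ^ i * ((a + 1) * (a + 2) * (a + 3)) := by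
                  apply Nat.mul_le_mul_left
                  exact Nat.mul_le_mul (Nat.mul_le_mul (by omega) (by omega)) (by omega)
        _ ≤ 3 * myE (a + i) := Nat.mul_le_mul_left _ (E_grow3 i (by omega) a)

lemma BO3 : ∀ r, 2 ≤ r → 3 ^ (2 * r + 1) * (2 * r + 1).factorial ≤ 3 * myE (3 * r) := by
  intro r hr
  induction r, hr using Nat.le_induction with
  | base => simp [myE, Nat.factorial]
  | succ r hr ih =>
      have h1 : 3 ^ (2 * (r + 1) + 1) * (2 * (r + 1) + 1).factorial
          = (9 * ((2 * r + 2) * (2 * r + 3))) * (3 ^ (2 * r + 1) * (2 * r + 1).factorial) := by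
        rw [show 2 * (r + 1) + 1 = (2 * r + 2) + 1 from rfl, Nat.factorial_succ,
          show 2 * r + 2 = (2 * r + 1) + 1 from rfl, Nat.factorial_succ, pow_add]
        ring
      rw [h1, show 3 * (r + 1) = 3 * r + 3 from by ring, myE_add3]
      calc 9 * ((2 * r + 2) * (2 * r + 3)) * (3 ^ (2 * r + 1) * (2 * r + 1).factorial)
          ≤ 9 * ((2 * r + 2) * (2 * r + 3)) * (3 * myE (3 * r)) := Nat.mul_le_mul_left _ ih
        _ = 3 * ((9 * ((2 * r + 2) * (2 * r + 3))) * myE (3 * r)) := by ring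
        _ ≤ 3 * ((8 * (3 * r + 1) * (3 * r + 2) * (3 * r + 3)) * myE (3 * r)) := by
            apply Nat.mul_le_mul_left
            apply Nat.mul_le_mul_right
            calc 9 * ((2 * r + 2) * (2 * r + 3)) ≤ 8 * ((3 * r + 1) * (3 * r + 2) * 2) := by
                  nlinarith
              _ ≤ 8 * ((3 * r + 1) * (3 * r + 2) * (3 * r + 3)) := by gcongr <;> omega
              _ = 8 * (3 * r + 1) * (3 * r + 2) * (3 * r + 3) := by ring
        _ = 3 * (8 * (3 * r + 1) * (3 * r + 2) * (3 * r + 3) * myE (3 * r)) := by ring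

lemma blockOdd {i p a : ℕ} (hi : 2 ≤ i) (hip : i * p = 2 * a + 3) :
    (i = 3 ∧ p = 3) ∨ i ^ p * p.factorial ≤ 3 * myE a := by
  have hoddip : Odd (i * p) := by
    rcases Nat.even_or_odd (i * p) with ⟨k, hk⟩ | h
    · omega
    · exact h
  have hoi : Odd i := by
    rcases Nat.even_or_odd i with h | h
    · exfalso; rcases h with ⟨j, hj⟩
      have : Even (i * p) := ⟨j * p, by rw [hj]; ring⟩
      rcases this with ⟨k, hk⟩; rcases hoddip with ⟨l, hl⟩; omega
    · exact h
  have hop : Odd p := by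
    rcases Nat.even_or_odd p with h | h
    · exfalso; rcases h with ⟨j, hj⟩
      have : Even (i * p) := ⟨i * j, by rw [hj]; ring⟩
      rcases this with ⟨k, hk⟩; rcases hoddip with ⟨l, hl⟩; omega
    · exact h
  obtain ⟨r, hr⟩ := hop
  have hp' : p = 2 * r + 1 := by omega
  rcases Nat.lt_or_ge i 5 with hi5 | hi5
  · -- i = 3 (i is odd, 2 ≤ i < 5)
    have hi3 : i = 3 := by rcases hoi with ⟨k, hk⟩; omega
    subst hi3
    have har : a = 3 * r := by omega
    rcases Nat.lt_or_ge r 2 with hr2 | hr2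
    · interval_cases r
      · right
        subst hp' har
        simp [myE, Nat.factorial]
      · left; omega
    · right
      rw [hp', har]
      exact BO3 r hr2
  · right
    rw [hp']
    exact BO1 i hi5 r a (by rw [← hp']; exact hip)


def W (s : Multiset ℕ) : ℕ := ∏ i ∈ s.toFinset, i ^ s.count i * (s.count i).factorial

lemma W_decomp (s : Multiset ℕ) {i : ℕ} (hi : i ∈ s) :
    W s = (i ^ s.count i * (s.count i).factorial) * W (s.filter (· ≠ i)) := by
  unfold W
  have hmem : i ∈ s.toFinset := Multiset.mem_toFinset.mpr hi
  rw [← Finset.mul_prod_erase s.toFinset _ hmem]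
  congr 1
  have ht : (s.filter (· ≠ i)).toFinset = s.toFinset.erase i := by
    rw [Multiset.toFinset_filter, Finset.filter_ne']
  rw [ht]
  apply Finset.prod_congr rfl
  intro j hj
  have hji : j ≠ i := Finset.ne_of_mem_erase hj
  rw [Multiset.count_filter, if_pos hji]

lemma sum_decomp (s : Multiset ℕ) (i : ℕ) :
    s.sum = i * s.count i + (s.filter (· ≠ i)).sum := by
  conv_lhs => rw [← Multiset.filter_add_not (· = i) s]
  rw [Multiset.sum_add, Multiset.filter_eq', Multiset.sum_replicate, smul_eq_mul]
  have hpred : (Multiset.filter (fun a => ¬a = i) s) = Multiset.filter (· ≠ i) s := by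
    simp [Ne]
  rw [hpred, Nat.mul_comm]

lemma s_eq (s : Multiset ℕ) (i : ℕ) :
    s = Multiset.replicate (s.count i) i + s.filter (· ≠ i) := by
  conv_lhs => rw [← Multiset.filter_add_not (· = i) s]
  rw [Multiset.filter_eq']

lemma main : ∀ (N : ℕ) (s : Multiset ℕ), Multiset.card s ≤ N → (∀ x ∈ s, 2 ≤ x) →
    (∀ h, s.sum = 2 * h → W s ≤ myE h) ∧
    (∀ h, s.sum = 2 * h + 3 → s = {3, 3, 3} ∨ W s ≤ 3 * myE h) := by
  intro N
  induction N with
  | zero =>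
      intro s hcard _
      have hs : s = 0 := by rw [← Multiset.card_eq_zero]; omega
      subst hs
      constructor
      · intro h hh
        simp at hh
        have : h = 0 := by omega
        subst this
        simp [W, myE]
      · intro h hh
        exfalso; simp at hh
  | succ N ih =>
      intro s hcard h2
      rcases eq_or_ne s 0 with rfl | hne
      · constructor
        · intro h hh
          simp at hh
          have : h = 0 := by omega
          subst this
          simp [W, myE]
        · intro h hh; exfalso; simp at hh
      obtain ⟨i, hi⟩ := Multiset.exists_mem_of_ne_zero hne
      set t := s.filter (· ≠ i) with htdef
      set p := s.count i with hpdef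
      have hi2 : 2 ≤ i := h2 i hi
      have hp1 : 1 ≤ p := Multiset.count_pos.mpr hi
      have ht2 : ∀ x ∈ t, 2 ≤ x := fun x hx => h2 x (Multiset.mem_filter.mp hx).1
      have hits : i ∉ t := by
        intro hmem
        exact (Multiset.mem_filter.mp hmem).2 rfl
      have htlt : t < s :=
        lt_of_le_of_ne (Multiset.filter_le _ s) (fun hts => hits (hts ▸ hi))
      have htcard : Multiset.card t ≤ N := by
        have := Multiset.card_lt_card htlt
        omega
      obtain ⟨IHe, IHo⟩ := ih t htcard ht2
      have hW : W s = (i ^ p * p.factorial) * W t := W_decomp s hi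
      have hsum : s.sum = i * p + t.sum := sum_decomp s i
      have hm2' : 2 * 1 ≤ i * p := Nat.mul_le_mul hi2 hp1
      obtain ⟨m, hm⟩ : ∃ m, i * p = m := ⟨_, rfl⟩
      rw [hm] at hsum hm2'
      have hm2 : 2 ≤ m := by omega
      have htsum0 : t = 0 ∨ 2 ≤ t.sum := by
        rcases eq_or_ne t 0 with h0 | h0
        · exact Or.inl h0
        · right
          obtain ⟨x, hx⟩ := Multiset.exists_mem_of_ne_zero h0
          calc 2 ≤ x := ht2 x hx
            _ ≤ t.sum := Multiset.single_le_sum (fun _ _ => Nat.zero_le _) x hx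
      constructor
      · -- even goal
        intro h hsh
        rw [hsum] at hsh
        rcases Nat.even_or_odd m with ⟨a0, hae⟩ | ⟨a0, hao⟩
        · have hip : i * p = 2 * a0 := by omega
          have hblock := blockEven hi2 hip
          obtain ⟨b, hb1, hb2⟩ : ∃ b, t.sum = 2 * b ∧ h = a0 + b := ⟨h - a0, by omega⟩
          rw [hW, hb2]
          calc (i ^ p * p.factorial) * W t ≤ myE a0 * myE b :=
                Nat.mul_le_mul hblock (IHe b hb1)
            _ ≤ myE (a0 + b) := myE_mul_le a0 b
        · set a := a0 - 1 with hadef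
          have hip3 : i * p = 2 * a + 3 := by omega
          have htne : t ≠ 0 := by
            intro h0
            rw [h0] at hsh
            simp at hsh
            omega
          have hts2 : 2 ≤ t.sum := htsum0.resolve_left htne
          obtain ⟨b, hb1, hb2⟩ : ∃ b, t.sum = 2 * b + 3 ∧ h = a + b + 3 :=
            ⟨(t.sum - 3) / 2, by omega⟩
          rcases blockOdd hi2 hip3 with ⟨hi3, hp3⟩ | hblock
          · have ha3 : a = 3 := by
              rw [hi3, hp3] at hip3; omega
            have h162 : i ^ p * p.factorial = 162 := by
              rw [hi3, hp3]; norm_num [Nat.factorial]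
            have htnot : t ≠ {3, 3, 3} := by
              intro h333
              apply hits
              rw [hi3, h333]
              decide
            have hWt : W t ≤ 3 * myE b := (IHo b hb1).resolve_left htnot
            rw [hW, h162, hb2, ha3]
            calc 162 * W t ≤ 162 * (3 * myE b) := Nat.mul_le_mul_left _ hWt
              _ = 486 * myE b := by ring
              _ ≤ myE (b + 6) := le486 b
              _ = myE (3 + b + 3) := by ring_nf
          · rcases IHo b hb1 with h333 | hWt
            · have hb3 : b = 3 := by
                rw [h333] at hb1
                have h9 : (({3, 3, 3} : Multiset ℕ)).sum = 9 := by decide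
                omega
              have hWt162 : W t = 162 := by rw [h333]; decide
              rw [hW, hWt162, hb2, hb3]
              calc (i ^ p * p.factorial) * 162 ≤ (3 * myE a) * 162 :=
                    Nat.mul_le_mul_right _ hblock
                _ = 486 * myE a := by ring
                _ ≤ myE (a + 6) := le486 a
                _ = myE (a + 3 + 3) := by ring_nf
            · rw [hW, hb2]
              calc (i ^ p * p.factorial) * W t ≤ (3 * myE a) * (3 * myE b) :=
                    Nat.mul_le_mul hblock hWt
                _ = 9 * (myE a * myE b) := by ring
                _ ≤ 9 * myE (a + b) := Nat.mul_le_mul_left _ (myE_mul_le a b)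
                _ ≤ 48 * myE (a + b) := Nat.mul_le_mul_right _ (by norm_num)
                _ ≤ myE (a + b + 3) := fortyeight_le (a + b)
      · -- odd goal
        intro h hsh
        rw [hsum] at hsh
        rcases Nat.even_or_odd m with ⟨a0, hae⟩ | ⟨a0, hao⟩
        · have hip : i * p = 2 * a0 := by omega
          have hblock := blockEven hi2 hip
          have htne : t ≠ 0 := by
            intro h0; rw [h0] at hsh; simp at hsh; omega
          have hts2 : 2 ≤ t.sum := htsum0.resolve_left htne
          obtain ⟨b, hb1, hb2⟩ : ∃ b, t.sum = 2 * b + 3 ∧ h = a0 + b :=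
            ⟨(t.sum - 3) / 2, by omega⟩
          rcases IHo b hb1 with h333 | hWt
          · have hb3 : b = 3 := by
              rw [h333] at hb1
              have h9 : (({3, 3, 3} : Multiset ℕ)).sum = 9 := by decide
              omega
            have hWt162 : W t = 162 := by rw [h333]; decide
            right
            rw [hW, hWt162, hb2, hb3]
            have ha1 : 1 ≤ a0 := by omega
            calc (i ^ p * p.factorial) * 162 ≤ myE a0 * 162 := Nat.mul_le_mul_right _ hblock
              _ = 3 * (54 * myE a0) := by ring
              _ ≤ 3 * myE (a0 + 3) := Nat.mul_le_mul_left _ (le54 a0 ha1)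
          · right
            rw [hW, hb2]
            calc (i ^ p * p.factorial) * W t ≤ myE a0 * (3 * myE b) :=
                  Nat.mul_le_mul hblock hWt
              _ = 3 * (myE a0 * myE b) := by ring
              _ ≤ 3 * myE (a0 + b) := Nat.mul_le_mul_left _ (myE_mul_le a0 b)
        · set a := a0 - 1 with hadef
          have hip3 : i * p = 2 * a + 3 := by omega
          obtain ⟨b, hb1, hb2⟩ : ∃ b, t.sum = 2 * b ∧ h = a + b := ⟨h - a, by omega⟩
          have hWt : W t ≤ myE b := IHe b hb1
          rcases blockOdd hi2 hip3 with ⟨hi3, hp3⟩ | hblock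
          · rcases eq_or_ne t 0 with ht0 | htne
            · left
              have hseq := s_eq s i
              rw [← htdef, ← hpdef, ht0, hi3, hp3] at hseq
              rw [hseq]
              decide
            · right
              have hts2 : 2 ≤ t.sum := htsum0.resolve_left htne
              have hb1' : 1 ≤ b := by omega
              have ha3 : a = 3 := by rw [hi3, hp3] at hip3; omega
              have h162 : i ^ p * p.factorial = 162 := by
                rw [hi3, hp3]; norm_num [Nat.factorial]
              rw [hW, h162, hb2, ha3]
              calc 162 * W t ≤ 162 * myE b := Nat.mul_le_mul_left _ hWt
                _ = 3 * (54 * myE b) := by ring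
                _ ≤ 3 * myE (b + 3) := Nat.mul_le_mul_left _ (le54 b hb1')
                _ = 3 * myE (3 + b) := by ring_nf
          · right
            rw [hW, hb2]
            calc (i ^ p * p.factorial) * W t ≤ (3 * myE a) * myE b :=
                  Nat.mul_le_mul hblock hWt
              _ = 3 * (myE a * myE b) := by ring
              _ ≤ 3 * myE (a + b) := Nat.mul_le_mul_left _ (myE_mul_le a b)

end SymAux



lemma symFactor_eq {n : ℕ} (q : n.Partition) : symFactor q = SymAux.W q.parts := by
  unfold symFactor SymAux.W
  symm
  apply Finset.prod_subset
  · intro x hx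
    rw [Multiset.mem_toFinset] at hx
    rw [Finset.mem_range]
    have hle : x ≤ q.parts.sum := Multiset.single_le_sum (fun _ _ => Nat.zero_le _) x hx
    rw [q.parts_sum] at hle
    omega
  · intro x _ hx
    rw [Multiset.mem_toFinset] at hx
    rw [Multiset.count_eq_zero.mpr hx]
    simp

lemma parts_two_le {n : ℕ} (q : n.Partition) (hq : 1 ∉ q.parts) :
    ∀ x ∈ q.parts, 2 ≤ x := by
  intro x hx
  have h1 := q.parts_pos hx
  have h2 : x ≠ 1 := fun h1' => hq (h1' ▸ hx)
  omega

/-- For every even positive `n`, the sum of `Sym(q)` over partitions `q` of `n` with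
no part equal to 1 is at most `P_1(n) · 2^(n/2) · (n/2)!`; and for every odd
`n ≥ 11` it is at most `P_1(n) · 3 · 2^((n−3)/2) · ((n−3)/2)!`. -/
theorem symSumNoOnes_upper_bounds :
    (∀ n : ℕ, 0 < n → Even n →
      symSumNoOnes n ≤ P1 n * 2 ^ (n / 2) * (n / 2).factorial) ∧
    (∀ n : ℕ, Odd n → 11 ≤ n →
      symSumNoOnes n ≤ P1 n * 3 * 2 ^ ((n - 3) / 2) * ((n - 3) / 2).factorial) := by
  constructor
  · intro n hn he
    have hb : ∀ q ∈ Finset.univ.filter (fun q : Nat.Partition n => 1 ∉ q.parts),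
        symFactor q ≤ 2 ^ (n / 2) * (n / 2).factorial := by
      intro q hq
      rw [Finset.mem_filter] at hq
      have h2 := parts_two_le q hq.2
      have hsum : q.parts.sum = 2 * (n / 2) := by
        rw [q.parts_sum]
        obtain ⟨k, hk⟩ := he; omega
      have hmain := (SymAux.main (Multiset.card q.parts) q.parts le_rfl h2).1 (n / 2) hsum
      rw [symFactor_eq]
      exact hmain
    calc symSumNoOnes n
        ≤ (Finset.univ.filter (fun q : Nat.Partition n => 1 ∉ q.parts)).card •
            (2 ^ (n / 2) * (n / 2).factorial) :=
          Finset.sum_le_card_nsmul _ _ _ hb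
      _ = P1 n * 2 ^ (n / 2) * (n / 2).factorial := by
          rw [smul_eq_mul, P1, mul_assoc]
  · intro n ho hn
    have hb : ∀ q ∈ Finset.univ.filter (fun q : Nat.Partition n => 1 ∉ q.parts),
        symFactor q ≤ 3 * (2 ^ ((n - 3) / 2) * ((n - 3) / 2).factorial) := by
      intro q hq
      rw [Finset.mem_filter] at hq
      have h2 := parts_two_le q hq.2
      have hsum : q.parts.sum = 2 * ((n - 3) / 2) + 3 := by
        rw [q.parts_sum]
        obtain ⟨k, hk⟩ := ho; omega
      have hmain := (SymAux.main (Multiset.card q.parts) q.parts le_rfl h2).2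
        ((n - 3) / 2) hsum
      rcases hmain with h333 | hle
      · exfalso
        have h9 : q.parts.sum = 9 := by rw [h333]; decide
        rw [q.parts_sum] at h9
        omega
      · rw [symFactor_eq]
        exact hle
    calc symSumNoOnes n
        ≤ (Finset.univ.filter (fun q : Nat.Partition n => 1 ∉ q.parts)).card •
            (3 * (2 ^ ((n - 3) / 2) * ((n - 3) / 2).factorial)) :=
          Finset.sum_le_card_nsmul _ _ _ hb
      _ = P1 n * 3 * 2 ^ ((n - 3) / 2) * ((n - 3) / 2).factorial := by
          rw [smul_eq_mul, P1]; ring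
end
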